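/- arXiv:1910.02817 — 3 statements merged into one kernel-verified Lean document; each statement's English description precedes it below -/
import Mathlib

section
/- Let k ≥ 1 be an integer and let r_0, …, r_k be distinct integers. Then there exists an integer M ≥ 1 such that for every real number ξ there is at least one index i ∈ {0, 1, …, k} with r_i ≠ ξ for which the point ξ_i = 1/(M(ξ − r_i)) satisfies ω_k^lead(ξ_i) = ω_k(ξ_i) = ω_k(ξ). -/
open Polynomial Filter

/-- The height (maximum absolute value of coefficients) of an integer polynomial,
as a real number. -/
noncomputable def intPolyNorm (P : Polynomial ℤ) : ℝ :=
  ((P.support.sup fun i => (P.coeff i).natAbs : ℕ) : ℝ)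

/-- The height (maximum absolute value of coefficients) of a real polynomial. -/
noncomputable def realPolyNorm (P : Polynomial ℝ) : ℝ :=
  (Finset.range (P.natDegree + 1)).sup' Finset.nonempty_range_add_one fun i => |P.coeff i|

/-- The maximum norm of an integer vector, as a real number. -/
noncomputable def vecNorm {n : ℕ} (x : Fin (n + 1) → ℤ) : ℝ :=
  ((Finset.univ.sup fun i => (x i).natAbs : ℕ) : ℝ)

/-- The exponent `ω_n(ξ)`: the supremum (in `EReal`) of all `ω ∈ ℝ` for which there are
infinitely many nonzero `P ∈ ℤ[x]` with `deg P ≤ n` and `|P(ξ)| ≤ ‖P‖ ^ (-ω)`. -/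
noncomputable def omegaExp (n : ℕ) (ξ : ℝ) : EReal :=
  sSup (Real.toEReal '' {ω : ℝ |
    {P : Polynomial ℤ | P ≠ 0 ∧ P.natDegree ≤ n ∧
      |Polynomial.aeval ξ P| ≤ intPolyNorm P ^ (-ω)}.Infinite})

/-- The exponent `ω_n^lead(ξ)`: as `ω_n(ξ)`, but restricted to polynomials whose
coefficient of `x^n` has absolute value equal to the height. -/
noncomputable def omegaLeadExp (n : ℕ) (ξ : ℝ) : EReal :=
  sSup (Real.toEReal '' {ω : ℝ |
    {P : Polynomial ℤ | P ≠ 0 ∧ P.natDegree ≤ n ∧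
      ((P.coeff n).natAbs : ℝ) = intPolyNorm P ∧
      |Polynomial.aeval ξ P| ≤ intPolyNorm P ^ (-ω)}.Infinite})

/-- The exponent `λ_n(ξ)`: the supremum (in `EReal`) of all `λ ∈ ℝ` for which there are
infinitely many nonzero `x = (x_0, …, x_n) ∈ ℤ^{n+1}` with
`max_{1 ≤ m ≤ n} |x_0 ξ^m − x_m| ≤ ‖x‖ ^ (−λ)`. -/
noncomputable def lambdaExp (n : ℕ) (ξ : ℝ) : EReal :=
  sSup (Real.toEReal '' {l : ℝ |
    {x : Fin (n + 1) → ℤ | x ≠ 0 ∧ ∀ m : Fin (n + 1), 1 ≤ (m : ℕ) →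
      |(x 0 : ℝ) * ξ ^ (m : ℕ) - (x m : ℝ)| ≤ vecNorm x ^ (-l)}.Infinite})

/-- The polynomial `Q(x) = (Mx)^k · P(1/(Mx) + r)`, i.e. `∑_{j=0}^{k} a_j M^{k−j} x^{k−j}`
where `P(x + r) = ∑_j a_j x^j`. -/
noncomputable def Qpoly (k : ℕ) (M : ℤ) (r : ℤ) (P : Polynomial ℤ) : Polynomial ℤ :=
  ∑ j ∈ Finset.range (k + 1),
    Polynomial.C ((P.comp (Polynomial.X + Polynomial.C r)).coeff j * M ^ (k - j)) *
      Polynomial.X ^ (k - j)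

lemma intPolyNorm_nonneg (P : Polynomial ℤ) : 0 ≤ intPolyNorm P := Nat.cast_nonneg _

lemma coeff_abs_le (P : Polynomial ℤ) (j : ℕ) :
    ((P.coeff j).natAbs : ℝ) ≤ intPolyNorm P := by
  by_cases h : j ∈ P.support
  · exact_mod_cast Nat.cast_le.mpr (Finset.le_sup (f := fun i => (P.coeff i).natAbs) h)
  · simp [Polynomial.notMem_support_iff.mp h, intPolyNorm_nonneg]

lemma exists_coeff_norm {P : Polynomial ℤ} (hP : P ≠ 0) :
    ∃ j, j ≤ P.natDegree ∧ intPolyNorm P = ((P.coeff j).natAbs : ℝ) := by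
  obtain ⟨j, hj, hEq⟩ := Finset.exists_mem_eq_sup P.support
    (Polynomial.nonempty_support_iff.mpr hP) (fun i => (P.coeff i).natAbs)
  exact ⟨j, Polynomial.le_natDegree_of_mem_supp j hj, by rw [intPolyNorm, hEq]⟩

lemma one_le_intPolyNorm {P : Polynomial ℤ} (hP : P ≠ 0) : 1 ≤ intPolyNorm P := by
  obtain ⟨j, hj⟩ := Polynomial.nonempty_support_iff.mpr hP
  have h1 : 1 ≤ ((P.coeff j).natAbs : ℝ) := by
    have := Polynomial.mem_support_iff.mp hj
    exact_mod_cast Nat.one_le_iff_ne_zero.mpr (Int.natAbs_ne_zero.mpr this)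
  exact h1.trans (coeff_abs_le P j)

/-- The real coefficient vector of an integer polynomial (first k+1 coefficients). -/
noncomputable def vecOf (k : ℕ) (P : Polynomial ℤ) : Fin (k + 1) → ℝ :=
  fun j => ((P.coeff j : ℤ) : ℝ)

lemma natAbs_cast_real (a : ℤ) : ((a.natAbs : ℝ)) = |(a : ℝ)| := by
  rw [Nat.cast_natAbs, Int.cast_abs]

lemma norm_vecOf {k : ℕ} {P : Polynomial ℤ} (h : P.natDegree ≤ k) :
    ‖vecOf k P‖ = intPolyNorm P := by
  apply le_antisymm
  · apply (pi_norm_le_iff_of_nonneg (intPolyNorm_nonneg P)).mpr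
    intro j
    rw [vecOf, Real.norm_eq_abs, ← natAbs_cast_real]
    exact coeff_abs_le P j
  · by_cases hP : P = 0
    · simp [hP, intPolyNorm]
    obtain ⟨j, hj, hEq⟩ := exists_coeff_norm hP
    rw [hEq]
    have hjk : j < k + 1 := Nat.lt_succ_of_le (hj.trans h)
    calc ((P.coeff j).natAbs : ℝ) = ‖vecOf k P ⟨j, hjk⟩‖ := by
          rw [vecOf, Real.norm_eq_abs, natAbs_cast_real]
      _ ≤ ‖vecOf k P‖ := norm_le_pi_norm _ _

lemma lin_bound {n : ℕ} (f : (Fin n → ℝ) →ₗ[ℝ] (Fin n → ℝ)) (hf : Function.Injective f) :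
    ∃ C : ℝ, 1 ≤ C ∧ ∀ x, ‖x‖ ≤ C * ‖f x‖ ∧ ‖f x‖ ≤ C * ‖x‖ := by
  have hsurj := LinearMap.injective_iff_surjective.mp hf
  let e := LinearEquiv.ofBijective f ⟨hf, hsurj⟩
  let F := LinearMap.toContinuousLinearMap f
  let G := LinearMap.toContinuousLinearMap (e.symm : (Fin n → ℝ) →ₗ[ℝ] (Fin n → ℝ))
  refine ⟨max 1 (max ‖F‖ ‖G‖), le_max_left _ _, fun x => ?_⟩
  constructor
  · have h1 : ‖x‖ = ‖G (f x)‖ := by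
      have : e.symm (f x) = x := e.symm_apply_apply x
      simp only [G, LinearMap.coe_toContinuousLinearMap']
      rw [show (e.symm : (Fin n → ℝ) →ₗ[ℝ] (Fin n → ℝ)) (f x) = e.symm (f x) from rfl, this]
    rw [h1]
    calc ‖G (f x)‖ ≤ ‖G‖ * ‖f x‖ := G.le_opNorm _
      _ ≤ max 1 (max ‖F‖ ‖G‖) * ‖f x‖ := by
          apply mul_le_mul_of_nonneg_right _ (norm_nonneg _)
          exact le_max_of_le_right (le_max_right _ _)
  · calc ‖f x‖ = ‖F x‖ := rfl
      _ ≤ ‖F‖ * ‖x‖ := F.le_opNorm _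
      _ ≤ max 1 (max ‖F‖ ‖G‖) * ‖x‖ := by
          apply mul_le_mul_of_nonneg_right _ (norm_nonneg _)
          exact le_max_of_le_right (le_max_left _ _)

/-- The real polynomial with coefficient vector `c`. -/
noncomputable def polyOfVec {k : ℕ} (c : Fin (k + 1) → ℝ) : Polynomial ℝ :=
  ∑ j : Fin (k + 1), Polynomial.C (c j) * Polynomial.X ^ (j : ℕ)

lemma polyOfVec_coeff {k : ℕ} (c : Fin (k + 1) → ℝ) (m : Fin (k + 1)) :
    (polyOfVec c).coeff m = c m := by
  rw [polyOfVec, Polynomial.finset_sum_coeff]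
  rw [Finset.sum_eq_single m]
  · simp
  · intro j _ hj
    rw [Polynomial.coeff_C_mul, Polynomial.coeff_X_pow, if_neg, mul_zero]
    exact fun h => hj (Fin.ext h.symm)
  · simp

lemma polyOfVec_natDegree {k : ℕ} (c : Fin (k + 1) → ℝ) : (polyOfVec c).natDegree ≤ k := by
  apply Polynomial.natDegree_sum_le_of_forall_le
  intro j _
  apply (Polynomial.natDegree_C_mul_le _ _).trans
  simp [Polynomial.natDegree_X_pow]
  omega

lemma polyOfVec_eq_zero {k : ℕ} {c : Fin (k + 1) → ℝ} (h : polyOfVec c = 0) : c = 0 := by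
  funext m
  have := polyOfVec_coeff c m
  rw [h] at this
  simpa using this.symm

lemma polyOfVec_vecOf {k : ℕ} {P : Polynomial ℤ} (h : P.natDegree ≤ k) :
    polyOfVec (vecOf k P) = P.map (Int.castRingHom ℝ) := by
  ext n
  rw [Polynomial.coeff_map]
  by_cases hn : n < k + 1
  · have := polyOfVec_coeff (vecOf k P) ⟨n, hn⟩
    simpa [vecOf] using this
  · push_neg at hn
    have h1 : (polyOfVec (vecOf k P)).coeff n = 0 :=
      Polynomial.coeff_eq_zero_of_natDegree_lt (lt_of_le_of_lt (polyOfVec_natDegree _) hn)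
    have h2 : P.coeff n = 0 :=
      Polynomial.coeff_eq_zero_of_natDegree_lt (lt_of_le_of_lt h hn)
    simp [h1, h2]

lemma finite_poly_norm_le (k : ℕ) (C : ℝ) :
    {P : Polynomial ℤ | P.natDegree ≤ k ∧ intPolyNorm P ≤ C}.Finite := by
  classical
  set N : ℕ := ⌊C⌋₊
  have hfin : ({x : Fin (k + 1) → ℤ | ∀ j, x j ∈ Set.Icc (-(N : ℤ)) (N : ℤ)}).Finite := by
    have := Set.Finite.pi (fun i : Fin (k + 1) => Set.finite_Icc (-(N : ℤ)) (N : ℤ))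
    exact this.subset (fun x hx => by intro j _; exact hx j)
  apply Set.Finite.of_finite_image (f := fun P : Polynomial ℤ => fun j : Fin (k+1) => P.coeff j)
  · apply hfin.subset
    rintro x ⟨P, ⟨hdeg, hnorm⟩, rfl⟩
    intro j
    have h1 : ((P.coeff j).natAbs : ℝ) ≤ C := (coeff_abs_le P j).trans hnorm
    have h2 : (P.coeff j).natAbs ≤ N := Nat.le_floor h1
    have h3 : |P.coeff j| ≤ (N : ℤ) := by
      rw [Int.abs_eq_natAbs]; exact_mod_cast h2
    exact abs_le.mp h3
  · rintro P ⟨hP, -⟩ Q ⟨hQ, -⟩ hPQ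
    ext n
    by_cases hn : n < k + 1
    · exact congrFun hPQ ⟨n, hn⟩
    · push_neg at hn
      rw [Polynomial.coeff_eq_zero_of_natDegree_lt (lt_of_le_of_lt hP hn),
        Polynomial.coeff_eq_zero_of_natDegree_lt (lt_of_le_of_lt hQ hn)]

lemma sSup_image_le_sSup_image {A B : Set ℝ}
    (h : ∀ ω ∈ A, ∀ ω' : ℝ, ω' < ω → ω' ∈ B) :
    sSup (Real.toEReal '' A) ≤ sSup (Real.toEReal '' B) := by
  apply sSup_le
  rintro x ⟨ω, hω, rfl⟩
  refine le_of_forall_lt fun z hz => ?_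
  obtain ⟨ω', h1, h2⟩ := EReal.exists_between_coe_real hz
  have hm : (Real.toEReal ω') ∈ Real.toEReal '' B :=
    ⟨ω', h ω hω ω' (by exact_mod_cast h2), rfl⟩
  exact lt_of_lt_of_le h1 (le_sSup hm)

lemma sSup_image_eq_top {A : Set ℝ} (h : ∀ ω : ℝ, ω ∈ A) :
    sSup (Real.toEReal '' A) = ⊤ := by
  by_contra hne
  obtain ⟨y, hy1, -⟩ := EReal.exists_between_coe_real (lt_top_iff_ne_top.mpr hne)
  have hm : (Real.toEReal y) ∈ Real.toEReal '' A := ⟨y, h y, rfl⟩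
  exact absurd (le_sSup hm) (not_le.mpr hy1)

lemma sSup_image_mono {A B : Set ℝ} (h : A ⊆ B) :
    sSup (Real.toEReal '' A) ≤ sSup (Real.toEReal '' B) :=
  sSup_le_sSup (Set.image_mono h)

lemma rpow_transfer_bound {a b c : ℝ} (ha : 1 ≤ a) (hb : 1 ≤ b) (hc : 1 ≤ c)
    (h1 : a ≤ c * b) (h2 : b ≤ c * a) (ω : ℝ) :
    a ^ (-ω) ≤ c ^ |ω| * b ^ (-ω) := by
  have ha0 : (0:ℝ) < a := by linarith
  have hb0 : (0:ℝ) < b := by linarith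
  have hc0 : (0:ℝ) < c := by linarith
  rcases le_or_gt 0 ω with hω | hω
  · rw [abs_of_nonneg hω]
    have hA : (0:ℝ) < a ^ ω := Real.rpow_pos_of_pos ha0 _
    have hB : (0:ℝ) < b ^ ω := Real.rpow_pos_of_pos hb0 _
    have hbω : b ^ ω ≤ c ^ ω * a ^ ω := by
      rw [← Real.mul_rpow hc0.le ha0.le]
      exact Real.rpow_le_rpow hb0.le h2 hω
    rw [Real.rpow_neg ha0.le, Real.rpow_neg hb0.le, inv_eq_one_div, inv_eq_one_div,
      mul_one_div, div_le_div_iff₀ hA hB]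
    linarith
  · rw [abs_of_neg hω]
    have : a ^ (-ω) ≤ (c * b) ^ (-ω) := Real.rpow_le_rpow ha0.le h1 (by linarith)
    rwa [Real.mul_rpow hc0.le hb0.le] at this

lemma map_transfer (k : ℕ) (ξ η : ℝ) (Extra : Polynomial ℤ → Prop)
    (A : Set (Polynomial ℤ)) (hA : A.Infinite)
    (T : Polynomial ℤ → Polynomial ℤ) (hinj : Set.InjOn T A)
    (c : ℝ) (hc : 1 ≤ c) (ω ω' : ℝ) (hlt : ω' < ω)
    (hAgood : ∀ P ∈ A, P ≠ 0 ∧ |Polynomial.aeval ξ P| ≤ intPolyNorm P ^ (-ω))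
    (hT : ∀ P ∈ A, T P ≠ 0 ∧ (T P).natDegree ≤ k ∧
      intPolyNorm P ≤ c * intPolyNorm (T P) ∧ intPolyNorm (T P) ≤ c * intPolyNorm P ∧
      |Polynomial.aeval η (T P)| ≤ c * |Polynomial.aeval ξ P| ∧ Extra (T P)) :
    {Q : Polynomial ℤ | Q ≠ 0 ∧ Q.natDegree ≤ k ∧ Extra Q ∧
      |Polynomial.aeval η Q| ≤ intPolyNorm Q ^ (-ω')}.Infinite := by
  classical
  set K : ℝ := c ^ (1 + |ω|) with hK
  have hK1 : 1 ≤ K := Real.one_le_rpow hc (by positivity)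
  set R : ℝ := K ^ (1 / (ω - ω')) with hR
  have hsub : ω - ω' > 0 := by linarith
  have hB : ((T '' A) \ {Q : Polynomial ℤ | Q.natDegree ≤ k ∧ intPolyNorm Q ≤ R}).Infinite :=
    (hA.image hinj).diff (finite_poly_norm_le k R)
  apply hB.mono
  rintro Q ⟨⟨P, hPA, rfl⟩, hQbig⟩
  obtain ⟨hP0, hPval⟩ := hAgood P hPA
  obtain ⟨hQ0, hQdeg, hn1, hn2, hval, hextra⟩ := hT P hPA
  have hPn : 1 ≤ intPolyNorm P := one_le_intPolyNorm hP0
  have hQn : 1 ≤ intPolyNorm (T P) := one_le_intPolyNorm hQ0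
  have hQR : R < intPolyNorm (T P) := by
    by_contra h
    exact hQbig ⟨hQdeg, not_lt.mp h⟩
  refine ⟨hQ0, hQdeg, hextra, ?_⟩
  have step1 : |Polynomial.aeval η (T P)| ≤ c * intPolyNorm P ^ (-ω) :=
    hval.trans (mul_le_mul_of_nonneg_left hPval (by linarith))
  have step2 : intPolyNorm P ^ (-ω) ≤ c ^ |ω| * intPolyNorm (T P) ^ (-ω) :=
    rpow_transfer_bound hPn hQn hc hn1 hn2 ω
  have hQpos : (0:ℝ) < intPolyNorm (T P) := by linarith
  have step3 : c * (c ^ |ω| * intPolyNorm (T P) ^ (-ω)) = K * intPolyNorm (T P) ^ (-ω) := by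
    rw [hK, Real.rpow_add (by linarith : (0:ℝ) < c), Real.rpow_one, mul_assoc]
  have step4 : K ≤ intPolyNorm (T P) ^ (ω - ω') := by
    have h1 : R ^ (ω - ω') ≤ intPolyNorm (T P) ^ (ω - ω') :=
      Real.rpow_le_rpow (by positivity) hQR.le hsub.le
    rwa [hR, ← Real.rpow_mul (by positivity), one_div,
      inv_mul_cancel₀ (ne_of_gt hsub), Real.rpow_one] at h1
  calc |Polynomial.aeval η (T P)|
      ≤ c * (c ^ |ω| * intPolyNorm (T P) ^ (-ω)) :=
        step1.trans (mul_le_mul_of_nonneg_left step2 (by linarith))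
    _ = K * intPolyNorm (T P) ^ (-ω) := step3
    _ ≤ intPolyNorm (T P) ^ (ω - ω') * intPolyNorm (T P) ^ (-ω) :=
        mul_le_mul_of_nonneg_right step4 (by positivity)
    _ = intPolyNorm (T P) ^ (-ω') := by
        rw [← Real.rpow_add hQpos]; ring_nf

lemma Qpoly_coeff (k : ℕ) (M : ℤ) (r : ℤ) (P : Polynomial ℤ) {m : ℕ} (hm : m ≤ k) :
    (Qpoly k M r P).coeff m = (P.comp (X + C r)).coeff (k - m) * M ^ m := by
  rw [Qpoly, Polynomial.finset_sum_coeff]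
  rw [Finset.sum_eq_single (k - m)]
  · rw [Polynomial.coeff_C_mul, Polynomial.coeff_X_pow, if_pos (by omega), mul_one,
      Nat.sub_sub_self hm]
  · intro j hj hne
    rw [Polynomial.coeff_C_mul, Polynomial.coeff_X_pow, if_neg, mul_zero]
    simp only [Finset.mem_range] at hj
    omega
  · intro h
    exact absurd (Finset.mem_range.mpr (by omega)) h

lemma Qpoly_natDegree (k : ℕ) (M : ℤ) (r : ℤ) (P : Polynomial ℤ) :
    (Qpoly k M r P).natDegree ≤ k := by
  apply Polynomial.natDegree_sum_le_of_forall_le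
  intro j _
  apply (Polynomial.natDegree_C_mul_le _ _).trans
  simp only [Polynomial.natDegree_X_pow]
  omega

lemma comp_X_add_C_cancel {R : Type*} [CommRing R] (r : R) (p : Polynomial R) :
    (p.comp (X + C r)).comp (X - C r) = p := by
  rw [Polynomial.comp_assoc]
  simp

lemma comp_X_sub_C_cancel {R : Type*} [CommRing R] (r : R) (p : Polynomial R) :
    (p.comp (X - C r)).comp (X + C r) = p := by
  rw [Polynomial.comp_assoc]
  simp

lemma comp_X_add_C_injective {R : Type*} [CommRing R] (r : R) :
    Function.Injective (fun p : Polynomial R => p.comp (X + C r)) := by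
  intro p q h
  dsimp only at h
  have h2 := congrArg (fun z : Polynomial R => z.comp (X - C r)) h
  rwa [comp_X_add_C_cancel, comp_X_add_C_cancel] at h2

lemma Qpoly_injOn (k : ℕ) {M : ℤ} (hM : M ≠ 0) (r : ℤ) :
    Set.InjOn (Qpoly k M r) {P : Polynomial ℤ | P.natDegree ≤ k} := by
  intro P hP P' hP' h
  apply comp_X_add_C_injective r
  show P.comp (X + C r) = P'.comp (X + C r)
  have hdeg : (P.comp (X + C r)).natDegree ≤ k := by
    rwa [Polynomial.natDegree_comp, Polynomial.natDegree_X_add_C, mul_one]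
  have hdeg' : (P'.comp (X + C r)).natDegree ≤ k := by
    rwa [Polynomial.natDegree_comp, Polynomial.natDegree_X_add_C, mul_one]
  ext n
  by_cases hn : n ≤ k
  · have h1 := Qpoly_coeff k M r P (Nat.sub_le k n)
    have h2 := Qpoly_coeff k M r P' (Nat.sub_le k n)
    rw [h] at h1
    rw [h1, Nat.sub_sub_self hn] at h2
    exact (mul_right_cancel₀ (pow_ne_zero _ hM) h2.symm).symm
  · push_neg at hn
    rw [Polynomial.coeff_eq_zero_of_natDegree_lt (lt_of_le_of_lt hdeg hn),
      Polynomial.coeff_eq_zero_of_natDegree_lt (lt_of_le_of_lt hdeg' hn)]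

lemma Qpoly_zero (k : ℕ) (M : ℤ) (r : ℤ) : Qpoly k M r 0 = 0 := by
  simp [Qpoly]

lemma Qpoly_ne_zero (k : ℕ) {M : ℤ} (hM : M ≠ 0) (r : ℤ) {P : Polynomial ℤ}
    (hP : P ≠ 0) (hdeg : P.natDegree ≤ k) : Qpoly k M r P ≠ 0 := by
  intro h
  apply hP
  apply Qpoly_injOn k hM r hdeg (by simp : (0:Polynomial ℤ).natDegree ≤ k)
  rw [h, Qpoly_zero]

lemma aeval_comp_shift (r : ℤ) (P : Polynomial ℤ) (ξ : ℝ) :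
    Polynomial.aeval (ξ - (r:ℝ)) (P.comp (X + C r)) = Polynomial.aeval ξ P := by
  rw [Polynomial.aeval_comp]
  simp

lemma Qpoly_value (k : ℕ) (M : ℤ) (r : ℤ) {P : Polynomial ℤ} (hdeg : P.natDegree ≤ k)
    {ξ η : ℝ} (hu : ξ - (r:ℝ) ≠ 0) (hMη : (M:ℝ) * η = (ξ - (r:ℝ))⁻¹) :
    Polynomial.aeval η (Qpoly k M r P) * (ξ - (r:ℝ)) ^ k = Polynomial.aeval ξ P := by
  set u : ℝ := ξ - (r:ℝ) with hudef
  set S : Polynomial ℤ := P.comp (X + C r) with hS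
  have hSdeg : S.natDegree < k + 1 := by
    rw [hS, Polynomial.natDegree_comp, Polynomial.natDegree_X_add_C, mul_one]
    omega
  have hRHS : Polynomial.aeval ξ P = ∑ j ∈ Finset.range (k + 1), (S.coeff j : ℝ) * u ^ j := by
    rw [← aeval_comp_shift r P ξ, ← hS, ← hudef, Polynomial.aeval_eq_sum_range' hSdeg]
    exact Finset.sum_congr rfl fun j _ => by rw [zsmul_eq_mul]
  have hLHS : Polynomial.aeval η (Qpoly k M r P) =
      ∑ j ∈ Finset.range (k + 1), (S.coeff j : ℝ) * (M:ℝ) ^ (k - j) * η ^ (k - j) := by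
    rw [Qpoly, map_sum]
    refine Finset.sum_congr rfl fun j _ => ?_
    rw [map_mul, Polynomial.aeval_C, map_pow, Polynomial.aeval_X, ← hS]
    simp only [algebraMap_int_eq, eq_intCast, Int.cast_mul, Int.cast_pow]
  rw [hLHS, hRHS, Finset.sum_mul]
  refine Finset.sum_congr rfl fun j hj => ?_
  have hjk : j ≤ k := by simpa using Nat.lt_succ_iff.mp (Finset.mem_range.mp hj)
  have hsplit : u ^ k = u ^ (k - j) * u ^ j := by
    rw [← pow_add, Nat.sub_add_cancel hjk]
  have hMηpow : (M:ℝ) ^ (k - j) * η ^ (k - j) = (u⁻¹) ^ (k - j) := by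
    rw [← mul_pow, hMη, hudef]
  calc (S.coeff j : ℝ) * (M:ℝ) ^ (k - j) * η ^ (k - j) * u ^ k
      = (S.coeff j : ℝ) * ((M:ℝ) ^ (k - j) * η ^ (k - j)) * (u ^ (k - j) * u ^ j) := by
        rw [← hsplit]; ring
    _ = (S.coeff j : ℝ) * ((u⁻¹) ^ (k - j) * u ^ (k - j)) * u ^ j := by
        rw [hMηpow]; ring
    _ = (S.coeff j : ℝ) * u ^ j := by
        rw [← mul_pow, inv_mul_cancel₀ hu, one_pow, mul_one]

/-- Generic "reverse and scale" map. -/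
noncomputable def Vpoly {R : Type*} [CommRing R] (k : ℕ) (M : R) (p : Polynomial R) :
    Polynomial R :=
  ∑ j ∈ Finset.range (k + 1), Polynomial.C (p.coeff j * M ^ (k - j)) * Polynomial.X ^ (k - j)

lemma Qpoly_eq_Vpoly (k : ℕ) (M r : ℤ) (P : Polynomial ℤ) :
    Qpoly k M r P = Vpoly k M (P.comp (X + C r)) := rfl

lemma Vpoly_coeff {R : Type*} [CommRing R] (k : ℕ) (M : R) (p : Polynomial R) {m : ℕ}
    (hm : m ≤ k) : (Vpoly k M p).coeff m = p.coeff (k - m) * M ^ m := by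
  rw [Vpoly, Polynomial.finset_sum_coeff]
  rw [Finset.sum_eq_single (k - m)]
  · rw [Polynomial.coeff_C_mul, Polynomial.coeff_X_pow, if_pos (by omega), mul_one,
      Nat.sub_sub_self hm]
  · intro j hj hne
    rw [Polynomial.coeff_C_mul, Polynomial.coeff_X_pow, if_neg, mul_zero]
    simp only [Finset.mem_range] at hj
    omega
  · intro h
    exact absurd (Finset.mem_range.mpr (by omega)) h

lemma Vpoly_natDegree {R : Type*} [CommRing R] [Nontrivial R] (k : ℕ) (M : R) (p : Polynomial R) :
    (Vpoly k M p).natDegree ≤ k := by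
  apply Polynomial.natDegree_sum_le_of_forall_le
  intro j _
  apply (Polynomial.natDegree_C_mul_le _ _).trans
  simp only [Polynomial.natDegree_X_pow]
  omega

lemma Vpoly_map (k : ℕ) (M : ℤ) (p : Polynomial ℤ) :
    (Vpoly k M p).map (Int.castRingHom ℝ) = Vpoly k ((M:ℤ):ℝ) (p.map (Int.castRingHom ℝ)) := by
  simp only [Vpoly, Polynomial.map_sum, Polynomial.map_mul, Polynomial.map_pow,
    Polynomial.map_C, Polynomial.map_X, Polynomial.coeff_map]
  refine Finset.sum_congr rfl fun j _ => ?_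
  push_cast
  norm_num

lemma Vpoly_add {R : Type*} [CommRing R] (k : ℕ) (M : R) (p q : Polynomial R) :
    Vpoly k M (p + q) = Vpoly k M p + Vpoly k M q := by
  rw [Vpoly, Vpoly, Vpoly, ← Finset.sum_add_distrib]
  refine Finset.sum_congr rfl fun j _ => ?_
  rw [Polynomial.coeff_add, add_mul, Polynomial.C_add, add_mul]

lemma Vpoly_smul (k : ℕ) (M : ℝ) (t : ℝ) (p : Polynomial ℝ) :
    Vpoly k M (t • p) = t • Vpoly k M p := by
  rw [Vpoly, Vpoly, Finset.smul_sum]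
  refine Finset.sum_congr rfl fun j _ => ?_
  rw [Polynomial.coeff_smul, smul_eq_mul, Polynomial.smul_eq_C_mul, ← mul_assoc,
    ← Polynomial.C_mul, mul_assoc]

lemma polyOfVec_add' {k : ℕ} (c c' : Fin (k + 1) → ℝ) :
    polyOfVec (c + c') = polyOfVec c + polyOfVec c' := by
  rw [polyOfVec, polyOfVec, polyOfVec, ← Finset.sum_add_distrib]
  refine Finset.sum_congr rfl fun j _ => ?_
  rw [Pi.add_apply, Polynomial.C_add, add_mul]

lemma polyOfVec_smul' {k : ℕ} (t : ℝ) (c : Fin (k + 1) → ℝ) :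
    polyOfVec (t • c) = t • polyOfVec c := by
  rw [polyOfVec, polyOfVec, Finset.smul_sum]
  refine Finset.sum_congr rfl fun j _ => ?_
  rw [Pi.smul_apply, smul_eq_mul, Polynomial.smul_eq_C_mul, ← mul_assoc, ← Polynomial.C_mul]

noncomputable def polyOfVecL (k : ℕ) : (Fin (k + 1) → ℝ) →ₗ[ℝ] Polynomial ℝ where
  toFun := polyOfVec
  map_add' := polyOfVec_add'
  map_smul' := polyOfVec_smul'

noncomputable def vecOfRL (k : ℕ) : Polynomial ℝ →ₗ[ℝ] (Fin (k + 1) → ℝ) where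
  toFun p := fun m => p.coeff m
  map_add' p q := by funext m; simp
  map_smul' t p := by funext m; simp

/-- The vector-level version of a linear polynomial map. -/
noncomputable def polyMapVec (k : ℕ) (L : Polynomial ℝ →ₗ[ℝ] Polynomial ℝ) :
    (Fin (k + 1) → ℝ) →ₗ[ℝ] (Fin (k + 1) → ℝ) :=
  (vecOfRL k).comp (L.comp (polyOfVecL k))

lemma poly_eq_zero_of_coeffs {R : Type*} [Semiring R] {k : ℕ} {p : Polynomial R} (hdeg : p.natDegree ≤ k)
    (h : ∀ m : Fin (k + 1), p.coeff (m : ℕ) = 0) : p = 0 := by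
  ext n
  by_cases hn : n < k + 1
  · simpa using h ⟨n, hn⟩
  · push_neg at hn
    simp [Polynomial.coeff_eq_zero_of_natDegree_lt (lt_of_le_of_lt hdeg hn)]

lemma polyMapVec_injective (k : ℕ) (L : Polynomial ℝ →ₗ[ℝ] Polynomial ℝ)
    (hdeg : ∀ p : Polynomial ℝ, p.natDegree ≤ k → (L p).natDegree ≤ k)
    (hinj : ∀ p : Polynomial ℝ, p.natDegree ≤ k → L p = 0 → p = 0) :
    Function.Injective (polyMapVec k L) := by
  rw [injective_iff_map_eq_zero]
  intro c hc
  have h0 : L (polyOfVec c) = 0 := by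
    apply poly_eq_zero_of_coeffs (hdeg _ (polyOfVec_natDegree c))
    intro m
    exact congrFun hc m
  exact polyOfVec_eq_zero (hinj _ (polyOfVec_natDegree c) h0)

lemma norm_equiv_of_linear (k : ℕ) (TZ : Polynomial ℤ → Polynomial ℤ)
    (L : Polynomial ℝ →ₗ[ℝ] Polynomial ℝ)
    (hdeg : ∀ p : Polynomial ℝ, p.natDegree ≤ k → (L p).natDegree ≤ k)
    (hinj : ∀ p : Polynomial ℝ, p.natDegree ≤ k → L p = 0 → p = 0)
    (hTdeg : ∀ P : Polynomial ℤ, P.natDegree ≤ k → (TZ P).natDegree ≤ k)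
    (hcompat : ∀ P : Polynomial ℤ, P.natDegree ≤ k →
      L (P.map (Int.castRingHom ℝ)) = (TZ P).map (Int.castRingHom ℝ)) :
    ∃ C : ℝ, 1 ≤ C ∧ ∀ P : Polynomial ℤ, P.natDegree ≤ k →
      intPolyNorm P ≤ C * intPolyNorm (TZ P) ∧ intPolyNorm (TZ P) ≤ C * intPolyNorm P := by
  obtain ⟨C, hC1, hC⟩ := lin_bound (polyMapVec k L) (polyMapVec_injective k L hdeg hinj)
  refine ⟨C, hC1, fun P hP => ?_⟩
  have hvec : polyMapVec k L (vecOf k P) = vecOf k (TZ P) := by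
    funext m
    show (L (polyOfVec (vecOf k P))).coeff m = _
    rw [polyOfVec_vecOf hP, hcompat P hP, vecOf, Polynomial.coeff_map]
    rfl
  obtain ⟨h1, h2⟩ := hC (vecOf k P)
  rw [hvec, norm_vecOf hP, norm_vecOf (hTdeg P hP)] at h1 h2
  exact ⟨h1, h2⟩

lemma Vpoly_eq_zero {R : Type*} [CommRing R] [IsDomain R] {k : ℕ} {M : R} (hM : M ≠ 0)
    {p : Polynomial R} (hdeg : p.natDegree ≤ k) (h : Vpoly k M p = 0) : p = 0 := by
  apply poly_eq_zero_of_coeffs hdeg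
  intro m
  have hm : (m : ℕ) ≤ k := Nat.lt_succ_iff.mp m.isLt
  have := Vpoly_coeff k M p (Nat.sub_le k (m : ℕ))
  rw [h, Polynomial.coeff_zero, Nat.sub_sub_self hm] at this
  exact Or.resolve_right (mul_eq_zero.mp this.symm) (pow_ne_zero _ hM)

/-- Composition with a fixed polynomial, as a linear map. -/
noncomputable def compL (q : Polynomial ℝ) : Polynomial ℝ →ₗ[ℝ] Polynomial ℝ where
  toFun p := p.comp q
  map_add' p p' := Polynomial.add_comp
  map_smul' t p := by simp [Polynomial.smul_comp]

/-- `Vpoly` as a linear map. -/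
noncomputable def VpolyL (k : ℕ) (M : ℝ) : Polynomial ℝ →ₗ[ℝ] Polynomial ℝ where
  toFun := Vpoly k M
  map_add' := Vpoly_add k M
  map_smul' t p := by simp [Vpoly_smul]

/-- The inverse-type transformation over `ℤ`. -/
noncomputable def Upoly (k : ℕ) (M : ℤ) (r : ℤ) (Q : Polynomial ℤ) : Polynomial ℤ :=
  (Vpoly k M Q).comp (X - C r)

lemma Upoly_natDegree (k : ℕ) (M r : ℤ) (Q : Polynomial ℤ) : (Upoly k M r Q).natDegree ≤ k := by
  rw [Upoly, Polynomial.natDegree_comp, Polynomial.natDegree_X_sub_C, mul_one]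
  exact Vpoly_natDegree k M Q

lemma Upoly_injOn (k : ℕ) {M : ℤ} (hM : M ≠ 0) (r : ℤ) :
    Set.InjOn (Upoly k M r) {Q : Polynomial ℤ | Q.natDegree ≤ k} := by
  intro Q hQ Q' hQ' h
  have h2 := congrArg (fun z : Polynomial ℤ => z.comp (X + C r)) h
  simp only [Upoly] at h2
  rw [comp_X_sub_C_cancel, comp_X_sub_C_cancel] at h2
  ext n
  by_cases hn : n ≤ k
  · have h1 := Vpoly_coeff k M Q (Nat.sub_le k n)
    have h2' := Vpoly_coeff k M Q' (Nat.sub_le k n)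
    rw [h2] at h1
    rw [h1, Nat.sub_sub_self hn] at h2'
    exact (mul_right_cancel₀ (pow_ne_zero _ hM) h2'.symm).symm
  · push_neg at hn
    rw [Polynomial.coeff_eq_zero_of_natDegree_lt (lt_of_le_of_lt hQ hn),
      Polynomial.coeff_eq_zero_of_natDegree_lt (lt_of_le_of_lt hQ' hn)]

lemma Upoly_zero (k : ℕ) (M r : ℤ) : Upoly k M r 0 = 0 := by
  simp [Upoly, Vpoly]

lemma Upoly_ne_zero (k : ℕ) {M : ℤ} (hM : M ≠ 0) (r : ℤ) {Q : Polynomial ℤ}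
    (hQ : Q ≠ 0) (hdeg : Q.natDegree ≤ k) : Upoly k M r Q ≠ 0 := by
  intro h
  apply hQ
  apply Upoly_injOn k hM r hdeg (by simp : (0:Polynomial ℤ).natDegree ≤ k)
  rw [h, Upoly_zero]

lemma Upoly_value (k : ℕ) {M : ℤ} (r : ℤ) {Q : Polynomial ℤ} (hdeg : Q.natDegree ≤ k)
    {ξ η : ℝ} (hM : ((M : ℤ) : ℝ) ≠ 0) (hu : ξ - (r:ℝ) ≠ 0)
    (hMη : (M:ℝ) * η = (ξ - (r:ℝ))⁻¹) :
    Polynomial.aeval ξ (Upoly k M r Q) = ((M:ℝ) * (ξ - (r:ℝ))) ^ k * Polynomial.aeval η Q := by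
  set u : ℝ := ξ - (r:ℝ) with hudef
  have hη : η = ((M:ℝ))⁻¹ * u⁻¹ := by
    rw [← hMη]
    field_simp
  have hQdeg : Q.natDegree < k + 1 := by omega
  have hLHS : Polynomial.aeval ξ (Upoly k M r Q) =
      ∑ j ∈ Finset.range (k + 1), (Q.coeff j : ℝ) * (M:ℝ) ^ (k - j) * u ^ (k - j) := by
    rw [Upoly, Polynomial.aeval_comp]
    have hXC : Polynomial.aeval ξ (X - C r : Polynomial ℤ) = u := by
      simp [hudef]
    rw [hXC, Vpoly, map_sum]
    refine Finset.sum_congr rfl fun j _ => ?_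
    rw [map_mul, Polynomial.aeval_C, map_pow, Polynomial.aeval_X]
    simp only [algebraMap_int_eq, eq_intCast, Int.cast_mul, Int.cast_pow]
  have hRHS : Polynomial.aeval η Q = ∑ j ∈ Finset.range (k + 1), (Q.coeff j : ℝ) * η ^ j := by
    rw [Polynomial.aeval_eq_sum_range' hQdeg]
    exact Finset.sum_congr rfl fun j _ => by rw [zsmul_eq_mul]
  rw [hLHS, hRHS, Finset.mul_sum]
  refine Finset.sum_congr rfl fun j hj => ?_
  symm
  have hjk : j ≤ k := Nat.lt_succ_iff.mp (Finset.mem_range.mp hj)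
  have hMsplit : (M:ℝ) ^ k = (M:ℝ) ^ (k - j) * (M:ℝ) ^ j := by
    rw [← pow_add, Nat.sub_add_cancel hjk]
  have husplit : u ^ k = u ^ (k - j) * u ^ j := by
    rw [← pow_add, Nat.sub_add_cancel hjk]
  have e1 : (M:ℝ) ^ j * ((M:ℝ)⁻¹) ^ j = 1 := by
    rw [← mul_pow, mul_inv_cancel₀ hM, one_pow]
  have e2 : u ^ j * (u⁻¹) ^ j = 1 := by
    rw [← mul_pow, mul_inv_cancel₀ hu, one_pow]
  calc ((M:ℝ) * u) ^ k * ((Q.coeff j : ℝ) * η ^ j)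
      = (Q.coeff j : ℝ) * ((M:ℝ) ^ (k - j) * u ^ (k - j)) *
          (((M:ℝ) ^ j * ((M:ℝ)⁻¹) ^ j) * (u ^ j * (u⁻¹) ^ j)) := by
        rw [hη, mul_pow, mul_pow, hMsplit, husplit]; ring
    _ = (Q.coeff j : ℝ) * (M:ℝ) ^ (k - j) * u ^ (k - j) := by
        rw [e1, e2]; ring

lemma Qpoly_norm_equiv (k : ℕ) {M : ℤ} (hM : M ≠ 0) (r : ℤ) :
    ∃ C : ℝ, 1 ≤ C ∧ ∀ P : Polynomial ℤ, P.natDegree ≤ k →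
      intPolyNorm P ≤ C * intPolyNorm (Qpoly k M r P) ∧
      intPolyNorm (Qpoly k M r P) ≤ C * intPolyNorm P := by
  have hMR : ((M:ℤ):ℝ) ≠ 0 := Int.cast_ne_zero.mpr hM
  apply norm_equiv_of_linear k (Qpoly k M r) ((VpolyL k (M:ℝ)).comp (compL (X + C (r:ℝ))))
  · intro p _
    exact Vpoly_natDegree k _ _
  · intro p hp h0
    have hcompdeg : (p.comp (X + C (r:ℝ))).natDegree ≤ k := by
      rwa [Polynomial.natDegree_comp, Polynomial.natDegree_X_add_C, mul_one]
    have h1 : p.comp (X + C (r:ℝ)) = 0 := Vpoly_eq_zero hMR hcompdeg h0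
    have h2 := congrArg (fun z : Polynomial ℝ => z.comp (X - C (r:ℝ))) h1
    rwa [comp_X_add_C_cancel, Polynomial.zero_comp] at h2
  · intro P _
    exact Qpoly_natDegree k M r P
  · intro P _
    show Vpoly k ((M:ℤ):ℝ) ((P.map (Int.castRingHom ℝ)).comp (X + C (r:ℝ))) = _
    have hmapcomp : (P.map (Int.castRingHom ℝ)).comp (X + C (r:ℝ)) =
        (P.comp (X + C r)).map (Int.castRingHom ℝ) := by
      rw [Polynomial.map_comp, Polynomial.map_add, Polynomial.map_X, Polynomial.map_C]
      rfl
    rw [hmapcomp, ← Vpoly_map, Qpoly_eq_Vpoly]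

lemma Upoly_norm_equiv (k : ℕ) {M : ℤ} (hM : M ≠ 0) (r : ℤ) :
    ∃ C : ℝ, 1 ≤ C ∧ ∀ Q : Polynomial ℤ, Q.natDegree ≤ k →
      intPolyNorm Q ≤ C * intPolyNorm (Upoly k M r Q) ∧
      intPolyNorm (Upoly k M r Q) ≤ C * intPolyNorm Q := by
  have hMR : ((M:ℤ):ℝ) ≠ 0 := Int.cast_ne_zero.mpr hM
  apply norm_equiv_of_linear k (Upoly k M r) ((compL (X - C (r:ℝ))).comp (VpolyL k (M:ℝ)))
  · intro p _
    show ((Vpoly k (M:ℝ) p).comp (X - C (r:ℝ))).natDegree ≤ k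
    rw [Polynomial.natDegree_comp, Polynomial.natDegree_X_sub_C, mul_one]
    exact Vpoly_natDegree k _ _
  · intro p hp h0
    have h0' : (Vpoly k (M:ℝ) p).comp (X - C (r:ℝ)) = 0 := h0
    have h2 := congrArg (fun z : Polynomial ℝ => z.comp (X + C (r:ℝ))) h0'
    rw [comp_X_sub_C_cancel, Polynomial.zero_comp] at h2
    exact Vpoly_eq_zero hMR hp h2
  · intro Q _
    exact Upoly_natDegree k M r Q
  · intro Q hQ
    show (Vpoly k ((M:ℤ):ℝ) (Q.map (Int.castRingHom ℝ))).comp (X - C (r:ℝ)) = _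
    rw [← Vpoly_map, Upoly, Polynomial.map_comp, Polynomial.map_sub, Polynomial.map_X,
      Polynomial.map_C]
    rfl

lemma comp_norm_equiv (k : ℕ) (r : ℤ) :
    ∃ c0 : ℝ, 1 ≤ c0 ∧ ∀ P : Polynomial ℤ, P.natDegree ≤ k →
      intPolyNorm P ≤ c0 * intPolyNorm (P.comp (X + C r)) ∧
      intPolyNorm (P.comp (X + C r)) ≤ c0 * intPolyNorm P := by
  apply norm_equiv_of_linear k (fun P => P.comp (X + C r)) (compL (X + C (r:ℝ)))
  · intro p _
    show (p.comp (X + C (r:ℝ))).natDegree ≤ _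
    rwa [Polynomial.natDegree_comp, Polynomial.natDegree_X_add_C, mul_one]
  · intro p hp h0
    have h0' : p.comp (X + C (r:ℝ)) = 0 := h0
    have h2 := congrArg (fun z : Polynomial ℝ => z.comp (X - C (r:ℝ))) h0'
    rwa [comp_X_add_C_cancel, Polynomial.zero_comp] at h2
  · intro P hP
    rwa [Polynomial.natDegree_comp, Polynomial.natDegree_X_add_C, mul_one]
  · intro P _
    show (P.map (Int.castRingHom ℝ)).comp (X + C (r:ℝ)) = _
    rw [Polynomial.map_comp, Polynomial.map_add, Polynomial.map_X, Polynomial.map_C]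
    rfl

lemma aeval_int_eval (P : Polynomial ℤ) (a : ℤ) :
    Polynomial.aeval ((a:ℤ):ℝ) P = ((P.eval a : ℤ) : ℝ) := by
  rw [Polynomial.aeval_def, Polynomial.eval₂_at_intCast]
  rfl

lemma eval_norm_bound (k : ℕ) (r : Fin (k + 1) → ℤ) (hr : Function.Injective r) :
    ∃ C2 : ℝ, 1 ≤ C2 ∧ ∀ P : Polynomial ℤ, P.natDegree ≤ k →
      ∃ i : Fin (k + 1), intPolyNorm P ≤ C2 * |((P.eval (r i) : ℤ) : ℝ)| := by
  have hmapadd : ∀ (c c' : Fin (k+1) → ℝ),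
      (fun i => Polynomial.eval ((r i : ℤ):ℝ) (polyOfVec (c + c'))) =
      (fun i => Polynomial.eval ((r i : ℤ):ℝ) (polyOfVec c)) +
      (fun i => Polynomial.eval ((r i : ℤ):ℝ) (polyOfVec c')) := by
    intro c c'
    funext i
    rw [polyOfVec_add', Polynomial.eval_add]
    rfl
  let g : (Fin (k+1) → ℝ) →ₗ[ℝ] (Fin (k+1) → ℝ) :=
    { toFun := fun c => fun i => Polynomial.eval ((r i : ℤ):ℝ) (polyOfVec c)
      map_add' := hmapadd
      map_smul' := by
        intro t c
        funext i
        simp only [RingHom.id_apply, Pi.smul_apply, smul_eq_mul]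
        rw [polyOfVec_smul', Polynomial.eval_smul, smul_eq_mul] }
  have hginj : Function.Injective g := by
    rw [injective_iff_map_eq_zero]
    intro c hc
    have hz : polyOfVec c = 0 := by
      apply Polynomial.eq_zero_of_natDegree_lt_card_of_eval_eq_zero (polyOfVec c)
        (f := fun i : Fin (k+1) => ((r i : ℤ) : ℝ))
      · intro i j hij
        exact hr (Int.cast_injective hij)
      · intro i
        exact congrFun hc i
      · rw [Fintype.card_fin]
        exact Nat.lt_succ_of_le (polyOfVec_natDegree c)
    exact polyOfVec_eq_zero hz
  obtain ⟨C, hC1, hC⟩ := lin_bound g hginj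
  refine ⟨C, hC1, fun P hP => ?_⟩
  obtain ⟨i₀, -, hi₀⟩ := Finset.exists_mem_eq_sup' (Finset.univ_nonempty)
    (fun i : Fin (k+1) => |((P.eval (r i) : ℤ):ℝ)|)
  refine ⟨i₀, ?_⟩
  have hval : ∀ i, g (vecOf k P) i = ((P.eval (r i) : ℤ):ℝ) := by
    intro i
    show Polynomial.eval ((r i : ℤ):ℝ) (polyOfVec (vecOf k P)) = _
    rw [polyOfVec_vecOf hP, Polynomial.eval_intCast_map]
    rfl
  have hgnorm : ‖g (vecOf k P)‖ ≤ |((P.eval (r i₀) : ℤ):ℝ)| := by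
    apply (pi_norm_le_iff_of_nonneg (abs_nonneg _)).mpr
    intro i
    rw [hval i, Real.norm_eq_abs, ← hi₀]
    exact Finset.le_sup' (fun i : Fin (k+1) => |((P.eval (r i) : ℤ):ℝ)|) (Finset.mem_univ i)
  calc intPolyNorm P = ‖vecOf k P‖ := (norm_vecOf hP).symm
    _ ≤ C * ‖g (vecOf k P)‖ := (hC _).1
    _ ≤ C * |((P.eval (r i₀) : ℤ):ℝ)| :=
        mul_le_mul_of_nonneg_left hgnorm (by linarith)

lemma comp_coeff_zero (r : ℤ) (P : Polynomial ℤ) :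
    (P.comp (X + C r)).coeff 0 = P.eval r := by
  rw [Polynomial.coeff_zero_eq_eval_zero, Polynomial.eval_comp]
  simp

lemma Qpoly_lead (k : ℕ) {M : ℤ} (hM1 : 1 ≤ M) (r : ℤ) {P : Polynomial ℤ}
    (hP : P ≠ 0) (hdeg : P.natDegree ≤ k)
    (hkey : ∀ j, j ≤ k → ((((P.comp (X + C r)).coeff j).natAbs : ℝ)) ≤
      ((M:ℤ):ℝ) ^ j * (((P.eval r).natAbs : ℕ) : ℝ)) :
    ((((Qpoly k M r P).coeff k).natAbs : ℕ) : ℝ) = intPolyNorm (Qpoly k M r P) := by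
  have hM0 : M ≠ 0 := by omega
  have hQ0 : Qpoly k M r P ≠ 0 := Qpoly_ne_zero k hM0 r hP hdeg
  have hMabs : ((M.natAbs : ℕ) : ℝ) = ((M:ℤ):ℝ) := by
    rw [natAbs_cast_real, abs_of_pos]
    exact_mod_cast hM1
  have hcoeffk : (Qpoly k M r P).coeff k = P.eval r * M ^ k := by
    rw [Qpoly_coeff k M r P (le_refl k), Nat.sub_self, comp_coeff_zero]
  apply le_antisymm
  · exact coeff_abs_le _ k
  · obtain ⟨j₀, hj₀le, hEq⟩ := exists_coeff_norm hQ0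
    rw [hEq]
    have hj₀k : j₀ ≤ k := hj₀le.trans (Qpoly_natDegree k M r P)
    have hcoeffj : (Qpoly k M r P).coeff j₀ = (P.comp (X + C r)).coeff (k - j₀) * M ^ j₀ :=
      Qpoly_coeff k M r P hj₀k
    calc (((Qpoly k M r P).coeff j₀).natAbs : ℝ)
        = ((((P.comp (X + C r)).coeff (k - j₀)).natAbs : ℕ) : ℝ) * ((M:ℤ):ℝ) ^ j₀ := by
          rw [hcoeffj, Int.natAbs_mul, Int.natAbs_pow]
          push_cast [hMabs]
          ring
      _ ≤ (((M:ℤ):ℝ) ^ (k - j₀) * (((P.eval r).natAbs : ℕ) : ℝ)) * ((M:ℤ):ℝ) ^ j₀ := by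
          apply mul_le_mul_of_nonneg_right (hkey _ (Nat.sub_le k j₀))
          positivity
      _ = (((P.eval r).natAbs : ℕ) : ℝ) * ((M:ℤ):ℝ) ^ k := by
          rw [mul_comm (((M:ℤ):ℝ) ^ (k - j₀)) _, mul_assoc, ← pow_add,
            Nat.sub_add_cancel hj₀k]
      _ = ((((Qpoly k M r P).coeff k).natAbs : ℕ) : ℝ) := by
          rw [hcoeffk, Int.natAbs_mul, Int.natAbs_pow]
          push_cast [hMabs]
          ring

lemma omegaLeadExp_le_omegaExp (n : ℕ) (ξ : ℝ) : omegaLeadExp n ξ ≤ omegaExp n ξ := by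
  apply sSup_image_mono
  intro ω hω
  exact hω.mono fun P hP => ⟨hP.1, hP.2.1, hP.2.2.2⟩

lemma omega_int_top (k : ℕ) (hk : 1 ≤ k) (a : ℤ) : omegaExp k ((a:ℤ):ℝ) = ⊤ := by
  apply sSup_image_eq_top
  intro ω
  simp only [Set.mem_setOf_eq]
  apply Set.infinite_of_injective_forall_mem
    (f := fun n : ℕ => Polynomial.C ((n:ℤ)+1) * (X - C a))
  · intro n m hnm
    have h1 := congrArg (fun p : Polynomial ℤ => p.coeff 1) hnm
    simp only [Polynomial.coeff_C_mul, Polynomial.coeff_sub, Polynomial.coeff_X_one,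
      Polynomial.coeff_C] at h1
    norm_num at h1
    exact_mod_cast h1
  · intro n
    have hC : ((n:ℤ)+1) ≠ 0 := by positivity
    have hne : Polynomial.C ((n:ℤ)+1) * (X - C a) ≠ 0 :=
      mul_ne_zero (Polynomial.C_ne_zero.mpr hC) (Polynomial.X_sub_C_ne_zero a)
    refine ⟨hne, ?_, ?_⟩
    · apply (Polynomial.natDegree_C_mul_le _ _).trans
      rw [Polynomial.natDegree_X_sub_C]
      exact hk
    · have hv : Polynomial.aeval ((a:ℤ):ℝ) (Polynomial.C ((n:ℤ)+1) * (X - C a)) = 0 := by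
        rw [map_mul, map_sub, Polynomial.aeval_X, Polynomial.aeval_C]
        simp
      rw [hv, abs_zero]
      exact Real.rpow_nonneg (intPolyNorm_nonneg _) _

lemma omega_rat_top (k : ℕ) (hk : 1 ≤ k) {q : ℤ} (hq : q ≠ 0) {η : ℝ}
    (hqη : (q:ℝ) * η = 1) :
    omegaLeadExp k η = ⊤ ∧ omegaExp k η = ⊤ := by
  set f : ℕ → Polynomial ℤ :=
    fun n => Polynomial.C (((n:ℤ)+1) * q) * X ^ k - Polynomial.C ((n:ℤ)+1) * X ^ (k-1) with hf
  have hcoeff : ∀ n m, (f n).coeff m =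
      (if m = k then ((n:ℤ)+1) * q else 0) - (if m = k - 1 then ((n:ℤ)+1) else 0) := by
    intro n m
    rw [hf]
    simp only [Polynomial.coeff_sub, Polynomial.coeff_C_mul, Polynomial.coeff_X_pow,
      mul_ite, mul_one, mul_zero]
  have hk1 : ¬(k = k - 1) := by omega
  have hcoeffk : ∀ n, (f n).coeff k = ((n:ℤ)+1) * q := by
    intro n
    rw [hcoeff, if_pos rfl, if_neg hk1, sub_zero]
  have hcoeffabs : ∀ n j, ((f n).coeff j).natAbs ≤ ((f n).coeff k).natAbs := by
    intro n j
    rw [hcoeffk, Int.natAbs_mul]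
    by_cases hjk : j = k
    · rw [hjk, hcoeffk, Int.natAbs_mul]
    · rw [hcoeff, if_neg hjk, zero_sub, Int.natAbs_neg]
      by_cases hj1 : j = k - 1
      · rw [if_pos hj1]
        exact Nat.le_mul_of_pos_right _ (Int.natAbs_pos.mpr hq)
      · rw [if_neg hj1]
        simp
  have hne : ∀ n, f n ≠ 0 := by
    intro n h0
    have := hcoeffk n
    rw [h0, Polynomial.coeff_zero] at this
    have : ((n:ℤ)+1) * q ≠ 0 := mul_ne_zero (by positivity) hq
    omega
  have hdeg : ∀ n, (f n).natDegree ≤ k := by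
    intro n
    apply (Polynomial.natDegree_sub_le _ _).trans
    apply max_le
    · exact (Polynomial.natDegree_C_mul_le _ _).trans (by rw [Polynomial.natDegree_X_pow])
    · exact (Polynomial.natDegree_C_mul_le _ _).trans
        (by rw [Polynomial.natDegree_X_pow]; omega)
  have hlead : ∀ n, (((f n).coeff k).natAbs : ℝ) = intPolyNorm (f n) := by
    intro n
    apply le_antisymm (coeff_abs_le _ k)
    obtain ⟨j₀, -, hEq⟩ := exists_coeff_norm (hne n)
    rw [hEq]
    exact_mod_cast hcoeffabs n j₀
  have hval : ∀ n, Polynomial.aeval η (f n) = 0 := by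
    intro n
    have hpow : η ^ k = η ^ (k-1) * η := by
      rw [← pow_succ]
      congr 1
      omega
    rw [hf]
    simp only [map_sub, map_mul, Polynomial.aeval_C, map_pow, Polynomial.aeval_X]
    rw [hpow]
    simp only [algebraMap_int_eq, eq_intCast]
    push_cast
    linear_combination (((n:ℝ)+1) * η^(k-1)) * hqη
  have hinj : Function.Injective f := by
    intro n m hnm
    have h1 := congrArg (fun p : Polynomial ℤ => p.coeff k) hnm
    simp only [hcoeffk] at h1
    have h2 := mul_right_cancel₀ hq h1
    have h3 : (n:ℤ) = m := by linarith
    exact_mod_cast h3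
  constructor
  · apply sSup_image_eq_top
    intro ω
    apply Set.infinite_of_injective_forall_mem (f := f) hinj
    intro n
    refine ⟨hne n, hdeg n, hlead n, ?_⟩
    rw [hval n, abs_zero]
    exact Real.rpow_nonneg (intPolyNorm_nonneg _) _
  · apply sSup_image_eq_top
    intro ω
    apply Set.infinite_of_injective_forall_mem (f := f) hinj
    intro n
    refine ⟨hne n, hdeg n, ?_⟩
    rw [hval n, abs_zero]
    exact Real.rpow_nonneg (intPolyNorm_nonneg _) _


/-- **Main Theorem.** For `k ≥ 1` and distinct integers `r_0, …, r_k`, there is an integer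
`M ≥ 1` such that for every real `ξ` there is an index `i` with `r_i ≠ ξ` for which
`ξ_i = 1/(M(ξ − r_i))` satisfies `ω_k^lead(ξ_i) = ω_k(ξ_i) = ω_k(ξ)`. -/
theorem mainThm (k : ℕ) (hk : 1 ≤ k) (r : Fin (k + 1) → ℤ) (hr : Function.Injective r) :
    ∃ M : ℤ, 1 ≤ M ∧ ∀ ξ : ℝ, ∃ i : Fin (k + 1), (r i : ℝ) ≠ ξ ∧
      omegaLeadExp k (1 / (M * (ξ - r i))) = omegaExp k (1 / (M * (ξ - r i))) ∧
      omegaExp k (1 / (M * (ξ - r i))) = omegaExp k ξ := by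
  classical
  obtain ⟨C2, hC21, hC2⟩ := eval_norm_bound k r hr
  choose Cc hCc1 hCc using fun i : Fin (k+1) => comp_norm_equiv k (r i)
  set C1 : ℝ := Finset.univ.sup' Finset.univ_nonempty Cc with hC1def
  have hC1i : ∀ i, Cc i ≤ C1 := fun i => Finset.le_sup' Cc (Finset.mem_univ i)
  have hC11 : 1 ≤ C1 := (hCc1 ⟨0, Nat.succ_pos k⟩).trans (hC1i ⟨0, Nat.succ_pos k⟩)
  set M : ℤ := (⌈C1 * C2⌉₊ : ℤ) + 1 with hMdef
  have hM1 : 1 ≤ M := by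
    have : (0:ℤ) ≤ (⌈C1 * C2⌉₊ : ℤ) := Int.natCast_nonneg _
    omega
  have hM0 : M ≠ 0 := by omega
  have hMR1 : (1:ℝ) ≤ ((M:ℤ):ℝ) := by exact_mod_cast hM1
  have hMR0 : ((M:ℤ):ℝ) ≠ 0 := by linarith
  have hMC : C1 * C2 ≤ ((M:ℤ):ℝ) := by
    calc C1 * C2 ≤ (⌈C1 * C2⌉₊ : ℝ) := Nat.le_ceil _
      _ ≤ ((M:ℤ):ℝ) := by rw [hMdef]; push_cast; linarith
  refine ⟨M, hM1, fun ξ => ?_⟩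
  by_cases hint : ∃ i₀, ((r i₀ : ℤ):ℝ) = ξ
  -- Case A : ξ is one of the rᵢ (an integer)
  · obtain ⟨i₀, hi₀⟩ := hint
    have hcard : 1 < Fintype.card (Fin (k+1)) := by
      rw [Fintype.card_fin]; omega
    obtain ⟨i, hii₀⟩ := Fintype.exists_ne_of_one_lt_card hcard i₀
    have hrne : ((r i : ℤ):ℝ) ≠ ξ := by
      rw [← hi₀]
      intro h
      exact hii₀ (hr (by exact_mod_cast h))
    set q : ℤ := M * (r i₀ - r i) with hqdef
    have hq : q ≠ 0 := mul_ne_zero hM0 (sub_ne_zero.mpr fun h => hii₀ (hr h).symm)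
    have hqξ : ((q:ℤ):ℝ) = ((M:ℤ):ℝ) * (ξ - ((r i : ℤ):ℝ)) := by
      rw [hqdef, ← hi₀]; push_cast; ring
    have hu : ξ - ((r i : ℤ):ℝ) ≠ 0 := sub_ne_zero.mpr (Ne.symm hrne)
    have hqη : ((q:ℤ):ℝ) * (1 / (((M:ℤ):ℝ) * (ξ - ((r i : ℤ):ℝ)))) = 1 := by
      rw [hqξ]
      field_simp
    obtain ⟨hlead, homega⟩ := omega_rat_top k hk hq hqη
    refine ⟨i, hrne, ?_, ?_⟩
    · show omegaLeadExp k (1 / (((M:ℤ):ℝ) * (ξ - ((r i : ℤ):ℝ)))) = _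
      rw [hlead, homega]
    · show omegaExp k (1 / (((M:ℤ):ℝ) * (ξ - ((r i : ℤ):ℝ)))) = _
      rw [homega, ← hi₀, omega_int_top k hk]
  -- Case B : ξ is none of the rᵢ
  · push_neg at hint
    set η : Fin (k+1) → ℝ := fun i => 1 / (((M:ℤ):ℝ) * (ξ - ((r i : ℤ):ℝ))) with hηdef
    have hu : ∀ i, ξ - ((r i : ℤ):ℝ) ≠ 0 := fun i => sub_ne_zero.mpr (Ne.symm (hint i))
    have hMη : ∀ i, ((M:ℤ):ℝ) * η i = (ξ - ((r i : ℤ):ℝ))⁻¹ := by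
      intro i
      have h1 : η i = ((M:ℤ):ℝ)⁻¹ * (ξ - ((r i : ℤ):ℝ))⁻¹ := by
        rw [hηdef]
        dsimp only
        rw [one_div, mul_inv]
      rw [h1, ← mul_assoc, mul_inv_cancel₀ hMR0, one_mul]
    set φ : Polynomial ℤ → Fin (k+1) :=
      fun P => if h : P.natDegree ≤ k then Classical.choose (hC2 P h) else ⟨0, Nat.succ_pos k⟩
      with hφdef
    have hφ : ∀ P (h : P.natDegree ≤ k),
        intPolyNorm P ≤ C2 * |((P.eval (r (φ P)) : ℤ):ℝ)| := by
      intro P h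
      rw [hφdef]
      simp only [dif_pos h]
      exact Classical.choose_spec (hC2 P h)
    -- Step 1 : ∃ i, ω(ξ) ≤ ω_lead(η i)
    have step1 : ∃ i, omegaExp k ξ ≤ omegaLeadExp k (η i) := by
      by_contra hcon
      push_neg at hcon
      choose ws hws1 hws2 using fun i => EReal.exists_between_coe_real (hcon i)
      obtain ⟨istar, -, histar⟩ := Finset.exists_mem_eq_sup' Finset.univ_nonempty ws
      have hωmaxlt : ((Finset.univ.sup' Finset.univ_nonempty ws : ℝ) : EReal) <
          omegaExp k ξ := by
        rw [histar]
        exact hws2 istar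
      rw [omegaExp] at hωmaxlt
      obtain ⟨x, hx, hltx⟩ := lt_sSup_iff.mp hωmaxlt
      obtain ⟨ω, hωmem, rfl⟩ := hx
      have hωgt : Finset.univ.sup' Finset.univ_nonempty ws < ω := by exact_mod_cast hltx
      simp only [Set.mem_setOf_eq] at hωmem
      set A : Set (Polynomial ℤ) := {P : Polynomial ℤ | P ≠ 0 ∧ P.natDegree ≤ k ∧
        |Polynomial.aeval ξ P| ≤ intPolyNorm P ^ (-ω)} with hAdef
      have hpart : ∃ i, {P : Polynomial ℤ | P ∈ A ∧ φ P = i}.Infinite := by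
        by_contra hfin
        push_neg at hfin
        have hsub : A ⊆ ⋃ i, {P : Polynomial ℤ | P ∈ A ∧ φ P = i} :=
          fun P hP => Set.mem_iUnion.mpr ⟨φ P, hP, rfl⟩
        exact Set.not_infinite.mpr
          (Set.Finite.subset (Set.finite_iUnion fun i => hfin i) hsub)
          hωmem
      obtain ⟨i, hAi⟩ := hpart
      obtain ⟨Cq, hCq1, hCq⟩ := Qpoly_norm_equiv k hM0 (r i)
      have hupow : (0:ℝ) < |ξ - ((r i : ℤ):ℝ)| ^ k := pow_pos (abs_pos.mpr (hu i)) k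
      have hc1 : 1 ≤ Cq + (|ξ - ((r i : ℤ):ℝ)| ^ k)⁻¹ := by
        have h0 : (0:ℝ) ≤ (|ξ - ((r i : ℤ):ℝ)| ^ k)⁻¹ := by positivity
        linarith
      have hwsle : ws i < ω :=
        lt_of_le_of_lt (Finset.le_sup' ws (Finset.mem_univ i)) hωgt
      have hCqc : Cq ≤ Cq + (|ξ - ((r i : ℤ):ℝ)| ^ k)⁻¹ := by
        have h0 : (0:ℝ) ≤ (|ξ - ((r i : ℤ):ℝ)| ^ k)⁻¹ := by positivity
        linarith
      have htrans := map_transfer k ξ (η i)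
        (fun Q => (((Q.coeff k).natAbs : ℕ) : ℝ) = intPolyNorm Q)
        {P : Polynomial ℤ | P ∈ A ∧ φ P = i} hAi
        (Qpoly k M (r i))
        ((Qpoly_injOn k hM0 (r i)).mono (fun P hP => hP.1.2.1))
        (Cq + (|ξ - ((r i : ℤ):ℝ)| ^ k)⁻¹) hc1 ω (ws i) hwsle
        (fun P hP => ⟨hP.1.1, hP.1.2.2⟩)
        ?_
      · have hle : ((ws i : ℝ) : EReal) ≤ omegaLeadExp k (η i) := by
          rw [omegaLeadExp]
          exact le_sSup ⟨ws i, htrans, rfl⟩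
        exact absurd hle (not_le.mpr (hws1 i))
      · rintro P ⟨⟨hP0, hPdeg, hPval⟩, hPφ⟩
        have hQv := Qpoly_value k M (r i) hPdeg (hu i) (hMη i)
        obtain ⟨hn1, hn2⟩ := hCq P hPdeg
        refine ⟨Qpoly_ne_zero k hM0 (r i) hP0 hPdeg, Qpoly_natDegree k M (r i) P,
          hn1.trans (mul_le_mul_of_nonneg_right hCqc (intPolyNorm_nonneg _)),
          hn2.trans (mul_le_mul_of_nonneg_right hCqc (intPolyNorm_nonneg _)), ?_, ?_⟩
        · -- the value estimate
          have habs : |Polynomial.aeval (η i) (Qpoly k M (r i) P)| *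
              |ξ - ((r i : ℤ):ℝ)| ^ k = |Polynomial.aeval ξ P| := by
            rw [← abs_pow, ← abs_mul, hQv]
          have heq : |Polynomial.aeval (η i) (Qpoly k M (r i) P)| =
              |Polynomial.aeval ξ P| * (|ξ - ((r i : ℤ):ℝ)| ^ k)⁻¹ :=
            (eq_mul_inv_iff_mul_eq₀ (ne_of_gt hupow)).mpr habs
          rw [heq, mul_comm]
          exact mul_le_mul_of_nonneg_right
            (le_add_of_nonneg_left (by linarith))
            (abs_nonneg _)
        · -- the leading-coefficient property
          apply Qpoly_lead k hM1 (r i) hP0 hPdeg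
          intro j hj
          rcases Nat.eq_zero_or_pos j with hj0 | hjpos
          · rw [hj0, comp_coeff_zero, pow_zero, one_mul]
          · have e1 : ((((P.comp (X + C (r i))).coeff j).natAbs : ℕ) : ℝ) ≤
                intPolyNorm (P.comp (X + C (r i))) := coeff_abs_le _ j
            have e2 := (hCc i P hPdeg).2
            have e3 : intPolyNorm P ≤ C2 * |((P.eval (r i) : ℤ):ℝ)| := by
              have := hφ P hPdeg
              rwa [hPφ] at this
            have habs0 : (0:ℝ) ≤ |((P.eval (r i) : ℤ):ℝ)| := abs_nonneg _
            have hMj : ((M:ℤ):ℝ) ≤ ((M:ℤ):ℝ) ^ j :=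
              le_self_pow₀ (by linarith) (by omega)
            have echain : ((((P.comp (X + C (r i))).coeff j).natAbs : ℕ) : ℝ) ≤
                ((M:ℤ):ℝ) ^ j * |((P.eval (r i) : ℤ):ℝ)| := by
              calc ((((P.comp (X + C (r i))).coeff j).natAbs : ℕ) : ℝ)
                  ≤ Cc i * intPolyNorm P := e1.trans e2
                _ ≤ Cc i * (C2 * |((P.eval (r i) : ℤ):ℝ)|) :=
                    mul_le_mul_of_nonneg_left e3 (by linarith [hCc1 i])
                _ ≤ C1 * (C2 * |((P.eval (r i) : ℤ):ℝ)|) :=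
                    mul_le_mul_of_nonneg_right (hC1i i) (by positivity)
                _ = (C1 * C2) * |((P.eval (r i) : ℤ):ℝ)| := by ring
                _ ≤ ((M:ℤ):ℝ) * |((P.eval (r i) : ℤ):ℝ)| :=
                    mul_le_mul_of_nonneg_right hMC habs0
                _ ≤ ((M:ℤ):ℝ) ^ j * |((P.eval (r i) : ℤ):ℝ)| :=
                    mul_le_mul_of_nonneg_right hMj habs0
            rwa [natAbs_cast_real (P.eval (r i))]
    obtain ⟨i, hi1⟩ := step1
    -- Step 2 : ω(η i) ≤ ω(ξ)
    have step2 : omegaExp k (η i) ≤ omegaExp k ξ := by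
      rw [omegaExp, omegaExp]
      apply sSup_image_le_sSup_image
      intro ω hω ω' hlt'
      simp only [Set.mem_setOf_eq] at hω ⊢
      obtain ⟨Cu, hCu1, hCu⟩ := Upoly_norm_equiv k hM0 (r i)
      have hc1 : 1 ≤ Cu + |((M:ℤ):ℝ) * (ξ - ((r i : ℤ):ℝ))| ^ k := by
        have h0 : (0:ℝ) ≤ |((M:ℤ):ℝ) * (ξ - ((r i : ℤ):ℝ))| ^ k := by positivity
        linarith
      have hCuc : Cu ≤ Cu + |((M:ℤ):ℝ) * (ξ - ((r i : ℤ):ℝ))| ^ k := by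
        have h0 : (0:ℝ) ≤ |((M:ℤ):ℝ) * (ξ - ((r i : ℤ):ℝ))| ^ k := by positivity
        linarith
      have htrans := map_transfer k (η i) ξ (fun _ => True)
        {Q : Polynomial ℤ | Q ≠ 0 ∧ Q.natDegree ≤ k ∧
          |Polynomial.aeval (η i) Q| ≤ intPolyNorm Q ^ (-ω)} hω
        (Upoly k M (r i))
        ((Upoly_injOn k hM0 (r i)).mono (fun Q hQ => hQ.2.1))
        (Cu + |((M:ℤ):ℝ) * (ξ - ((r i : ℤ):ℝ))| ^ k) hc1 ω ω' hlt'
        (fun Q hQ => ⟨hQ.1, hQ.2.2⟩)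
        ?_
      · exact htrans.mono (fun Q hQ => ⟨hQ.1, hQ.2.1, hQ.2.2.2⟩)
      · rintro Q ⟨hQ0, hQdeg, hQval⟩
        have hUv := Upoly_value k (r i) hQdeg hMR0 (hu i) (hMη i)
        obtain ⟨hn1, hn2⟩ := hCu Q hQdeg
        refine ⟨Upoly_ne_zero k hM0 (r i) hQ0 hQdeg, Upoly_natDegree k M (r i) Q,
          hn1.trans (mul_le_mul_of_nonneg_right hCuc (intPolyNorm_nonneg _)),
          hn2.trans (mul_le_mul_of_nonneg_right hCuc (intPolyNorm_nonneg _)), ?_, trivial⟩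
        rw [hUv, abs_mul, abs_pow]
        exact mul_le_mul_of_nonneg_right
          (le_add_of_nonneg_left (by linarith))
          (abs_nonneg _)
    have h3 := omegaLeadExp_le_omegaExp k (η i)
    refine ⟨i, hint i, ?_, ?_⟩
    · show omegaLeadExp k (η i) = omegaExp k (η i)
      exact le_antisymm h3 (step2.trans hi1)
    · show omegaExp k (η i) = omegaExp k ξ
      exact le_antisymm step2 (hi1.trans h3)
end

section
/- Let k ≥ 1 be an integer and let w be a real number. Then the sets S = {ξ ∈ ℝ : ω_k(ξ) ≥ w} and S^lead = {ξ ∈ ℝ : ω_k^lead(ξ) ≥ w} have the same Hausdorff dimension. -/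
open Polynomial Filter

namespace Cor2

/-- ℕ-valued height -/
def ht (P : Polynomial ℤ) : ℕ := P.support.sup fun i => (P.coeff i).natAbs

lemma intPolyNorm_eq (P : Polynomial ℤ) : intPolyNorm P = (ht P : ℝ) := rfl

lemma natAbs_coeff_le_ht (P : Polynomial ℤ) (i : ℕ) : (P.coeff i).natAbs ≤ ht P := by
  by_cases h : i ∈ P.support
  · exact Finset.le_sup (f := fun i => (P.coeff i).natAbs) h
  · simp [ht, Polynomial.notMem_support_iff.mp h]

lemma abs_coeff_le (P : Polynomial ℤ) (i : ℕ) : |((P.coeff i : ℤ) : ℝ)| ≤ intPolyNorm P := by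
  rw [intPolyNorm_eq, ← Int.cast_abs]
  have := natAbs_coeff_le_ht P i
  have h2 : ((P.coeff i).natAbs : ℝ) ≤ (ht P : ℝ) := by exact_mod_cast this
  rwa [Nat.cast_natAbs] at h2

lemma one_le_ht {P : Polynomial ℤ} (hP : P ≠ 0) : 1 ≤ ht P := by
  obtain ⟨i, hi⟩ := (Polynomial.support_nonempty.mpr hP)
  have h1 : 1 ≤ (P.coeff i).natAbs := by
    have := Polynomial.mem_support_iff.mp hi
    omega
  calc 1 ≤ (P.coeff i).natAbs := h1
    _ ≤ ht P := natAbs_coeff_le_ht P i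

lemma one_le_intPolyNorm {P : Polynomial ℤ} (hP : P ≠ 0) : 1 ≤ intPolyNorm P := by
  rw [intPolyNorm_eq]; exact_mod_cast one_le_ht hP

lemma intPolyNorm_nonneg (P : Polynomial ℤ) : 0 ≤ intPolyNorm P := Nat.cast_nonneg _

lemma ht_eq_sup_range {P : Polynomial ℤ} {k : ℕ} (h : P.natDegree ≤ k) :
    ht P = (Finset.range (k + 1)).sup fun d => (P.coeff d).natAbs := by
  apply le_antisymm
  · apply Finset.sup_mono
    intro i hi
    have := Polynomial.le_natDegree_of_mem_supp i hi
    exact Finset.mem_range.mpr (by omega)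
  · apply Finset.sup_le
    intro d _
    exact natAbs_coeff_le_ht P d

lemma finite_bounded (k B : ℕ) : {P : Polynomial ℤ | P.natDegree ≤ k ∧ ht P ≤ B}.Finite := by
  have hinj : Set.InjOn (fun P : Polynomial ℤ => fun i : Fin (k+1) => P.coeff i)
      {P : Polynomial ℤ | P.natDegree ≤ k ∧ ht P ≤ B} := by
    intro P hP Q hQ hPQ
    ext n
    rcases le_or_gt n k with hn | hn
    · exact congrFun hPQ ⟨n, by omega⟩
    · rw [Polynomial.coeff_eq_zero_of_natDegree_lt (lt_of_le_of_lt hP.1 hn),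
        Polynomial.coeff_eq_zero_of_natDegree_lt (lt_of_le_of_lt hQ.1 hn)]
  have himg : (fun P : Polynomial ℤ => fun i : Fin (k+1) => P.coeff i) ''
      {P : Polynomial ℤ | P.natDegree ≤ k ∧ ht P ≤ B} ⊆
      Set.pi Set.univ fun _ : Fin (k+1) => Set.Icc (-(B:ℤ)) (B:ℤ) := by
    rintro g ⟨P, hP, rfl⟩ i _
    have h1 : (P.coeff (i:ℕ)).natAbs ≤ B := le_trans (natAbs_coeff_le_ht P i) hP.2
    simp only [Set.mem_Icc]
    omega
  have : (Set.pi Set.univ fun _ : Fin (k+1) => Set.Icc (-(B:ℤ)) (B:ℤ)).Finite :=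
    Set.Finite.pi fun _ => Set.finite_Icc _ _
  exact Set.Finite.of_finite_image (this.subset himg) hinj

lemma le_sSup_toEReal_iff {S : Set ℝ} (hS : ∀ ⦃a b : ℝ⦄, a ∈ S → b ≤ a → b ∈ S) (w : ℝ) :
    (w : EReal) ≤ sSup (Real.toEReal '' S) ↔ ∀ ω : ℝ, ω < w → ω ∈ S := by
  constructor
  · intro h ω hω
    have hlt : (ω : EReal) < sSup (Real.toEReal '' S) :=
      lt_of_lt_of_le (EReal.coe_lt_coe_iff.mpr hω) h
    obtain ⟨x, ⟨σ, hσ, rfl⟩, hx⟩ := lt_sSup_iff.mp hlt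
    exact hS hσ (le_of_lt (EReal.coe_lt_coe_iff.mp hx))
  · intro h
    apply le_of_forall_lt
    intro c hc
    have key : ∀ ω : ℝ, ω < w → c < sSup (Real.toEReal '' S) ∨ ¬ (c < (ω : EReal)) → True := fun _ _ _ => trivial
    have step : ∀ ω : ℝ, ω ∈ S → (ω : EReal) ≤ sSup (Real.toEReal '' S) :=
      fun ω hω => le_sSup ⟨ω, hω, rfl⟩
    induction c using EReal.rec with
    | bot =>
        calc (⊥ : EReal) < ((w - 1 : ℝ) : EReal) := EReal.bot_lt_coe _
          _ ≤ _ := step _ (h _ (by linarith))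
    | coe x =>
        have hxw : x < w := EReal.coe_lt_coe_iff.mp hc
        calc ((x : ℝ) : EReal) < (((x + w) / 2 : ℝ) : EReal) := EReal.coe_lt_coe_iff.mpr (by linarith)
          _ ≤ _ := step _ (h _ (by linarith))
    | top => exact absurd hc (by simp)

lemma rpow_mono_exp {P : Polynomial ℤ} (hP : P ≠ 0) {a b : ℝ} (hab : b ≤ a) :
    intPolyNorm P ^ (-a) ≤ intPolyNorm P ^ (-b) :=
  Real.rpow_le_rpow_of_exponent_le (one_le_intPolyNorm hP) (by linarith)

lemma omegaExp_ge_iff (n : ℕ) (ξ w : ℝ) :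
    (w : EReal) ≤ omegaExp n ξ ↔ ∀ ω : ℝ, ω < w →
      {P : Polynomial ℤ | P ≠ 0 ∧ P.natDegree ≤ n ∧
        |Polynomial.aeval ξ P| ≤ intPolyNorm P ^ (-ω)}.Infinite := by
  apply le_sSup_toEReal_iff
  intro a b ha hba
  refine Set.Infinite.mono ?_ ha
  rintro P ⟨h1, h2, h3⟩
  exact ⟨h1, h2, le_trans h3 (rpow_mono_exp h1 hba)⟩

lemma omegaLeadExp_ge_iff (n : ℕ) (ξ w : ℝ) :
    (w : EReal) ≤ omegaLeadExp n ξ ↔ ∀ ω : ℝ, ω < w →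
      {P : Polynomial ℤ | P ≠ 0 ∧ P.natDegree ≤ n ∧
        ((P.coeff n).natAbs : ℝ) = intPolyNorm P ∧
        |Polynomial.aeval ξ P| ≤ intPolyNorm P ^ (-ω)}.Infinite := by
  apply le_sSup_toEReal_iff
  intro a b ha hba
  refine Set.Infinite.mono ?_ ha
  rintro P ⟨h1, h2, h3, h4⟩
  exact ⟨h1, h2, h3, le_trans h4 (rpow_mono_exp h1 hba)⟩

lemma omegaLead_le_omega (n : ℕ) (ξ : ℝ) : omegaLeadExp n ξ ≤ omegaExp n ξ := by
  apply sSup_le_sSup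
  apply Set.image_mono
  intro ω hω
  refine Set.Infinite.mono ?_ hω
  rintro P ⟨h1, h2, _, h4⟩
  exact ⟨h1, h2, h4⟩

lemma choose_le_two_pow (i j : ℕ) : i.choose j ≤ 2 ^ i := by
  rcases le_or_gt j i with h | h
  · calc i.choose j ≤ ∑ m ∈ Finset.range (i+1), i.choose m :=
        Finset.single_le_sum (fun m _ => Nat.zero_le _) (Finset.mem_range.mpr (by omega))
      _ = 2 ^ i := Nat.sum_range_choose i
  · rw [Nat.choose_eq_zero_of_lt h]; exact Nat.zero_le _

lemma comp_eq_sum (k : ℕ) (r : ℤ) (P : Polynomial ℤ) (hP : P.natDegree ≤ k) :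
    P.comp (X + C r) = ∑ i ∈ Finset.range (k+1), C (P.coeff i) * (X + C r) ^ i := by
  conv_lhs => rw [P.as_sum_range' (k+1) (by omega)]
  rw [Polynomial.comp, Polynomial.eval₂_finset_sum]
  apply Finset.sum_congr rfl
  intro i _
  rw [← Polynomial.C_mul_X_pow_eq_monomial, Polynomial.eval₂_mul, Polynomial.eval₂_C,
    Polynomial.eval₂_X_pow]

lemma comp_coeff (k : ℕ) (r : ℤ) (P : Polynomial ℤ) (hP : P.natDegree ≤ k) (j : ℕ) :
    (P.comp (X + C r)).coeff j =
      ∑ i ∈ Finset.range (k+1), P.coeff i * (r ^ (i - j) * (i.choose j : ℤ)) := by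
  rw [comp_eq_sum k r P hP, Polynomial.finset_sum_coeff]
  apply Finset.sum_congr rfl
  intro i _
  rw [Polynomial.coeff_C_mul, Polynomial.coeff_X_add_C_pow]

lemma exists_shift (k : ℕ) (r : ℤ) :
    ∃ C' : ℝ, 1 ≤ C' ∧ ∀ P : Polynomial ℤ, P.natDegree ≤ k → ∀ j : ℕ,
      |(((P.comp (X + C r)).coeff j : ℤ) : ℝ)| ≤ C' * intPolyNorm P := by
  set D : ℝ := (|(r:ℝ)| + 1) ^ k * 2 ^ k with hD
  have hD0 : 0 < D := by positivity
  refine ⟨(k+1) * D + 1, by nlinarith, ?_⟩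
  intro P hP j
  have hterm : ∀ i, i ≤ k →
      |((P.coeff i : ℤ):ℝ) * ((r:ℝ) ^ (i - j) * (i.choose j : ℝ))| ≤ intPolyNorm P * D := by
    intro i hik
    rw [abs_mul, abs_mul]
    have h1 : |((P.coeff i : ℤ):ℝ)| ≤ intPolyNorm P := abs_coeff_le P i
    have h2 : |(r:ℝ) ^ (i - j)| ≤ (|(r:ℝ)| + 1) ^ k := by
      rw [abs_pow]
      calc |(r:ℝ)| ^ (i-j) ≤ (|(r:ℝ)| + 1) ^ (i-j) :=
            pow_le_pow_left₀ (abs_nonneg _) (by linarith) _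
        _ ≤ (|(r:ℝ)| + 1) ^ k := pow_le_pow_right₀ (by linarith [abs_nonneg (r:ℝ)]) (by omega)
    have h3 : |(i.choose j : ℝ)| ≤ 2 ^ k := by
      rw [abs_of_nonneg (by positivity)]
      have h4 := choose_le_two_pow i j
      have h5 : (2:ℕ) ^ i ≤ 2 ^ k := Nat.pow_le_pow_right (by omega) hik
      exact_mod_cast le_trans h4 h5
    rw [hD]
    apply mul_le_mul h1 ?_ (by positivity) (intPolyNorm_nonneg P)
    exact mul_le_mul h2 h3 (abs_nonneg _) (by positivity)
  have hsum : |∑ i ∈ Finset.range (k+1), ((P.coeff i : ℤ):ℝ) * ((r:ℝ) ^ (i - j) * (i.choose j : ℝ))|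
      ≤ (k+1) * (intPolyNorm P * D) := by
    calc |∑ i ∈ Finset.range (k+1), ((P.coeff i : ℤ):ℝ) * ((r:ℝ) ^ (i - j) * (i.choose j : ℝ))|
        ≤ ∑ i ∈ Finset.range (k+1), |((P.coeff i : ℤ):ℝ) * ((r:ℝ) ^ (i - j) * (i.choose j : ℝ))| :=
          Finset.abs_sum_le_sum_abs _ _
      _ ≤ ∑ _i ∈ Finset.range (k+1), intPolyNorm P * D := by
          apply Finset.sum_le_sum
          intro i hi
          exact hterm i (by have := Finset.mem_range.mp hi; omega)
      _ = (k+1) * (intPolyNorm P * D) := by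
          rw [Finset.sum_const, Finset.card_range, nsmul_eq_mul]; push_cast; ring
  rw [comp_coeff k r P hP j]
  push_cast
  calc |∑ i ∈ Finset.range (k+1), ((P.coeff i : ℤ):ℝ) * ((r:ℝ) ^ (i - j) * (i.choose j : ℝ))|
      ≤ (k+1) * (intPolyNorm P * D) := hsum
    _ ≤ ((k+1) * D + 1) * intPolyNorm P := by nlinarith [intPolyNorm_nonneg P]

lemma eval_cast (P : Polynomial ℤ) (r : ℤ) : ((P.eval r : ℤ) : ℝ) = Polynomial.aeval ((r:ℤ):ℝ) P := by
  simp [Polynomial.aeval_def, Polynomial.eval₂_eq_eval_map, Polynomial.eval_intCast_map]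

lemma exists_node (k : ℕ) (N : ℤ) :
    ∃ C : ℝ, 1 ≤ C ∧ ∀ P : Polynomial ℤ, P.natDegree ≤ k →
      ∃ i : Fin (k+1), intPolyNorm P ≤ C * |((P.eval (N + 2 + (i:ℕ)) : ℤ) : ℝ)| := by
  classical
  set x : Fin (k+1) → ℝ := fun i => ((N + 2 + (i:ℕ) : ℤ) : ℝ) with hx
  have hinj : Function.Injective x := by
    intro i j hij
    have : ((N + 2 + (i:ℕ) : ℤ) : ℝ) = ((N + 2 + (j:ℕ) : ℤ) : ℝ) := hij
    have h2 : (N + 2 + (i:ℕ) : ℤ) = N + 2 + (j:ℕ) := by exact_mod_cast this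
    have : (i:ℕ) = (j:ℕ) := by omega
    exact Fin.ext this
  have hdet : (Matrix.vandermonde x).det ≠ 0 := Matrix.det_vandermonde_ne_zero_iff.mpr hinj
  have hunit : IsUnit (Matrix.vandermonde x).det := isUnit_iff_ne_zero.mpr hdet
  have hInv : Invertible (Matrix.vandermonde x) := (Matrix.vandermonde x).invertibleOfIsUnitDet hunit
  set e : (Fin (k+1) → ℝ) ≃ₗ[ℝ] (Fin (k+1) → ℝ) := (Matrix.vandermonde x).toLinearEquiv' hInv with he
  set ce := e.toContinuousLinearEquiv with hce
  set C : ℝ := max ‖(ce.symm : (Fin (k+1) → ℝ) →L[ℝ] (Fin (k+1) → ℝ))‖ 1 with hC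
  refine ⟨C, le_max_right _ _, ?_⟩
  intro P hP
  set p : Fin (k+1) → ℝ := fun j => ((P.coeff (j:ℕ) : ℤ) : ℝ) with hp
  -- values vector
  have hVp : ∀ i, (Matrix.vandermonde x).mulVec p i = ((P.eval (N + 2 + (i:ℕ)) : ℤ) : ℝ) := by
    intro i
    have hev : P.eval (N + 2 + (i:ℕ)) = ∑ j ∈ Finset.range (k+1), P.coeff j * (N + 2 + (i:ℕ))^j :=
      Polynomial.eval_eq_sum_range' (by omega) _
    have : (Matrix.vandermonde x).mulVec p i = ∑ j : Fin (k+1), x i ^ (j:ℕ) * p j := by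
      simp [Matrix.mulVec, Matrix.vandermonde, dotProduct]
    rw [this, hev]
    push_cast
    rw [← Fin.sum_univ_eq_sum_range (fun j => ((P.coeff j : ℤ):ℝ) * ((N:ℝ) + 2 + (i:ℕ))^j) (k+1)]
    apply Finset.sum_congr rfl
    intro j _
    simp [hx, hp]
    ring
  -- norm of p bounds intPolyNorm
  have hnormp : intPolyNorm P ≤ ‖p‖ := by
    rw [intPolyNorm_eq, ht_eq_sup_range hP]
    obtain ⟨d, hd, hds⟩ := Finset.exists_mem_eq_sup (Finset.range (k+1)) ⟨0, Finset.mem_range.mpr (by omega)⟩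
      (fun d => (P.coeff d).natAbs)
    rw [hds]
    have hd' : d < k + 1 := Finset.mem_range.mp hd
    calc ((P.coeff d).natAbs : ℝ) = |p ⟨d, hd'⟩| := by
          rw [hp]; simp [Nat.cast_natAbs]
      _ ≤ ‖p‖ := by rw [← Real.norm_eq_abs]; exact norm_le_pi_norm p _
  -- p = ce.symm (values)
  have hpe : p = ce.symm ((Matrix.vandermonde x).mulVec p) := by
    have : e p = (Matrix.vandermonde x).mulVec p := by
      simp [he, Matrix.toLinearEquiv']
    rw [← this]
    simp [hce]
  -- choose max coordinate
  obtain ⟨i, _, hi⟩ := Finset.exists_mem_eq_sup' (Finset.univ_nonempty (α := Fin (k+1)))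
    (fun i => |(Matrix.vandermonde x).mulVec p i|)
  refine ⟨i, ?_⟩
  have hnn : (0:ℝ) ≤ Finset.univ.sup' Finset.univ_nonempty (fun i => |(Matrix.vandermonde x).mulVec p i|) := by
    rw [hi]; positivity
  have hv : ‖(Matrix.vandermonde x).mulVec p‖ ≤ |(Matrix.vandermonde x).mulVec p i| := by
    rw [← hi]
    rw [pi_norm_le_iff_of_nonneg hnn]
    intro j
    rw [Real.norm_eq_abs]
    exact Finset.le_sup' (fun i => |(Matrix.vandermonde x).mulVec p i|) (Finset.mem_univ j)
  calc intPolyNorm P ≤ ‖p‖ := hnormp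
    _ = ‖ce.symm ((Matrix.vandermonde x).mulVec p)‖ := by rw [← hpe]
    _ ≤ ‖(ce.symm : (Fin (k+1) → ℝ) →L[ℝ] (Fin (k+1) → ℝ))‖ * ‖(Matrix.vandermonde x).mulVec p‖ :=
        (ce.symm : (Fin (k+1) → ℝ) →L[ℝ] (Fin (k+1) → ℝ)).le_opNorm _
    _ ≤ C * |(Matrix.vandermonde x).mulVec p i| := by
        apply mul_le_mul (le_max_left _ _) hv (norm_nonneg _)
        linarith [le_max_right ‖(ce.symm : (Fin (k+1) → ℝ) →L[ℝ] (Fin (k+1) → ℝ))‖ (1:ℝ)]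
    _ = C * |((P.eval (N + 2 + (i:ℕ)) : ℤ) : ℝ)| := by rw [hVp]

lemma Qpoly_coeff (k : ℕ) (M r : ℤ) (P : Polynomial ℤ) {d : ℕ} (hd : d ≤ k) :
    (Qpoly k M r P).coeff d = (P.comp (X + C r)).coeff (k - d) * M ^ d := by
  rw [Qpoly, Polynomial.finset_sum_coeff]
  rw [Finset.sum_eq_single (k - d)]
  · rw [Polynomial.coeff_C_mul, Polynomial.coeff_X_pow]
    have h1 : k - (k - d) = d := by omega
    rw [h1, if_pos rfl, mul_one]
  · intro j hj hne
    rw [Polynomial.coeff_C_mul, Polynomial.coeff_X_pow, if_neg, mul_zero]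
    intro h
    have hjk : j < k + 1 := Finset.mem_range.mp hj
    omega
  · intro h
    exact absurd (Finset.mem_range.mpr (by omega : k - d < k + 1)) h

lemma Qpoly_natDegree_le (k : ℕ) (M r : ℤ) (P : Polynomial ℤ) :
    (Qpoly k M r P).natDegree ≤ k := by
  apply le_trans (Polynomial.natDegree_sum_le _ _)
  rw [Finset.fold_max_le]
  refine ⟨Nat.zero_le _, ?_⟩
  intro j _
  apply le_trans (Polynomial.natDegree_C_mul_le _ _)
  have : (X ^ (k - j) : Polynomial ℤ).natDegree = k - j := Polynomial.natDegree_X_pow _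
  omega

lemma Qpoly_coeff_eq_zero (k : ℕ) (M r : ℤ) (P : Polynomial ℤ) {d : ℕ} (hd : k < d) :
    (Qpoly k M r P).coeff d = 0 :=
  Polynomial.coeff_eq_zero_of_natDegree_lt (lt_of_le_of_lt (Qpoly_natDegree_le k M r P) hd)

lemma Qpoly_injOn (k : ℕ) {M : ℤ} (hM : M ≠ 0) (r : ℤ) :
    Set.InjOn (Qpoly k M r) {P : Polynomial ℤ | P.natDegree ≤ k} := by
  intro P hP Q hQ hPQ
  have hcomp : P.comp (X + C r) = Q.comp (X + C r) := by
    ext j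
    rcases le_or_gt j k with hj | hj
    · have h1 := Qpoly_coeff k M r P (d := k - j) (by omega)
      have h2 := Qpoly_coeff k M r Q (d := k - j) (by omega)
      have h3 : k - (k - j) = j := by omega
      rw [h3] at h1 h2
      have hc : (Qpoly k M r P).coeff (k-j) = (Qpoly k M r Q).coeff (k-j) := by rw [hPQ]
      rw [h1, h2] at hc
      exact mul_right_cancel₀ (pow_ne_zero _ hM) hc
    · have hd1 : (P.comp (X + C r)).natDegree ≤ k := by
        refine le_trans (Polynomial.natDegree_comp_le) ?_
        calc P.natDegree * (X + C r).natDegree ≤ P.natDegree * 1 := by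
              apply Nat.mul_le_mul_left
              exact le_trans (Polynomial.natDegree_add_le _ _) (by simp)
          _ ≤ k := by simpa using hP
      have hd2 : (Q.comp (X + C r)).natDegree ≤ k := by
        refine le_trans (Polynomial.natDegree_comp_le) ?_
        calc Q.natDegree * (X + C r).natDegree ≤ Q.natDegree * 1 := by
              apply Nat.mul_le_mul_left
              exact le_trans (Polynomial.natDegree_add_le _ _) (by simp)
          _ ≤ k := by simpa using hQ
      rw [Polynomial.coeff_eq_zero_of_natDegree_lt (lt_of_le_of_lt hd1 hj),
        Polynomial.coeff_eq_zero_of_natDegree_lt (lt_of_le_of_lt hd2 hj)]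
  have : (P.comp (X + C r)).comp (X - C r) = (Q.comp (X + C r)).comp (X - C r) := by rw [hcomp]
  rwa [Polynomial.comp_assoc, Polynomial.comp_assoc, Polynomial.add_comp, Polynomial.X_comp,
    Polynomial.C_comp, sub_add_cancel, Polynomial.comp_X, Polynomial.comp_X] at this

lemma natDegree_comp_shift_le {k : ℕ} (r : ℤ) {P : Polynomial ℤ} (hP : P.natDegree ≤ k) :
    (P.comp (X + C r)).natDegree ≤ k := by
  refine le_trans (Polynomial.natDegree_comp_le) ?_
  calc P.natDegree * (X + C r).natDegree ≤ P.natDegree * 1 := by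
        apply Nat.mul_le_mul_left
        exact le_trans (Polynomial.natDegree_add_le _ _) (by simp)
    _ ≤ k := by simpa using hP

lemma Qpoly_ht (k : ℕ) {M r : ℤ} (hM : 1 ≤ M) (P : Polynomial ℤ)
    (hMa : ∀ j, j ≤ k → |(P.comp (X + C r)).coeff j| ≤ M ^ j * |(P.comp (X + C r)).coeff 0|) :
    ht (Qpoly k M r P) = ((P.comp (X + C r)).coeff 0 * M ^ k).natAbs := by
  rw [ht_eq_sup_range (Qpoly_natDegree_le k M r P)]
  apply le_antisymm
  · apply Finset.sup_le
    intro d hd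
    have hdk : d ≤ k := by have := Finset.mem_range.mp hd; omega
    rw [Qpoly_coeff k M r P hdk]
    set a := fun j => (P.comp (X + C r)).coeff j
    have key : |a (k - d) * M ^ d| ≤ |a 0 * M ^ k| := by
      rw [abs_mul, abs_mul, abs_pow, abs_pow, abs_of_nonneg (by omega : (0:ℤ) ≤ M)]
      calc |a (k-d)| * M ^ d ≤ (M ^ (k-d) * |a 0|) * M ^ d := by
            apply mul_le_mul_of_nonneg_right (hMa (k-d) (by omega)) (by positivity)
        _ = |a 0| * M ^ k := by
            rw [mul_comm (M ^ (k-d)) (|a 0|), mul_assoc, ← pow_add]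
            congr 2
            omega
    have : ((a (k-d) * M ^ d).natAbs : ℤ) ≤ ((a 0 * M ^ k).natAbs : ℤ) := by
      rwa [← Int.abs_eq_natAbs, ← Int.abs_eq_natAbs]
    exact_mod_cast this
  · have hk : k ∈ Finset.range (k+1) := Finset.mem_range.mpr (by omega)
    have := Qpoly_coeff k M r P (le_refl k)
    rw [Nat.sub_self] at this
    calc ((P.comp (X + C r)).coeff 0 * M ^ k).natAbs
        = ((Qpoly k M r P).coeff k).natAbs := by rw [this]
      _ ≤ _ := Finset.le_sup (f := fun d => ((Qpoly k M r P).coeff d).natAbs) hk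

lemma aeval_comp_shift (r : ℤ) (P : Polynomial ℤ) (y : ℝ) :
    Polynomial.aeval y (P.comp (X + C r)) = Polynomial.aeval (y + (r:ℝ)) P := by
  rw [Polynomial.aeval_comp]; simp

lemma aeval_eq_sum_range {k : ℕ} {P : Polynomial ℤ} (hP : P.natDegree ≤ k) (x : ℝ) :
    Polynomial.aeval x P = ∑ j ∈ Finset.range (k+1), ((P.coeff j : ℤ):ℝ) * x ^ j := by
  rw [Polynomial.aeval_def, Polynomial.eval₂_eq_eval_map,
    Polynomial.eval_eq_sum_range' (n := k+1)
      (lt_of_le_of_lt (le_trans Polynomial.natDegree_map_le hP) (by omega)) x]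
  apply Finset.sum_congr rfl
  intro j _
  rw [Polynomial.coeff_map]
  rfl

lemma Qpoly_aeval (k : ℕ) {M r : ℤ} (hM : M ≠ 0) (P : Polynomial ℤ) (hP : P.natDegree ≤ k)
    {ξ : ℝ} (hξ : ξ ≠ (r:ℝ)) :
    (ξ - (r:ℝ))^k * Polynomial.aeval (((M:ℝ) * (ξ - (r:ℝ)))⁻¹) (Qpoly k M r P) =
      Polynomial.aeval ξ P := by
  have hMR : (M:ℝ) ≠ 0 := Int.cast_ne_zero.mpr hM
  have ht : ξ - (r:ℝ) ≠ 0 := sub_ne_zero.mpr hξ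
  have hu : (M:ℝ) * ((M:ℝ) * (ξ - (r:ℝ)))⁻¹ * (ξ - (r:ℝ)) = 1 := by field_simp
  have hQ : Polynomial.aeval (((M:ℝ) * (ξ - (r:ℝ)))⁻¹) (Qpoly k M r P) =
      ∑ j ∈ Finset.range (k+1),
        ((((P.comp (X + C r)).coeff j * M ^ (k-j) : ℤ)):ℝ) * (((M:ℝ) * (ξ - (r:ℝ)))⁻¹)^(k-j) := by
    rw [Qpoly, map_sum]
    apply Finset.sum_congr rfl
    intro j _
    rw [map_mul, map_pow, Polynomial.aeval_X, Polynomial.aeval_C]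
    rfl
  rw [hQ, Finset.mul_sum]
  have hstep : ∀ j ∈ Finset.range (k+1),
      (ξ - (r:ℝ))^k * (((((P.comp (X + C r)).coeff j * M ^ (k-j) : ℤ)):ℝ) *
        (((M:ℝ) * (ξ - (r:ℝ)))⁻¹)^(k-j))
      = (((P.comp (X + C r)).coeff j : ℤ):ℝ) * (ξ - (r:ℝ))^j := by
    intro j hj
    have hjk : j ≤ k := by have := Finset.mem_range.mp hj; omega
    have h1 : (ξ - (r:ℝ))^k = (ξ - (r:ℝ))^(k-j) * (ξ - (r:ℝ))^j := by
      rw [← pow_add]; congr 1; omega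
    push_cast
    calc (ξ - (r:ℝ))^k * ((((P.comp (X + C r)).coeff j : ℤ):ℝ) * (M:ℝ)^(k-j) *
          (((M:ℝ) * (ξ - (r:ℝ)))⁻¹)^(k-j))
        = (((P.comp (X + C r)).coeff j : ℤ):ℝ) *
            (((M:ℝ) * ((M:ℝ) * (ξ - (r:ℝ)))⁻¹ * (ξ - (r:ℝ)))^(k-j) * (ξ - (r:ℝ))^j) := by
          rw [h1, mul_pow, mul_pow]; ring
      _ = (((P.comp (X + C r)).coeff j : ℤ):ℝ) * (ξ - (r:ℝ))^j := by rw [hu, one_pow, one_mul]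
  rw [Finset.sum_congr rfl hstep,
    ← aeval_eq_sum_range (natDegree_comp_shift_le r hP) (ξ - (r:ℝ)), aeval_comp_shift]
  congr 1
  ring

lemma rpow_trick {D ω ω' : ℝ} (hD : 1 ≤ D) (hlt : ω' < ω) :
    ∃ K : ℝ, 1 ≤ K ∧ ∀ H t : ℝ, 1 ≤ H → 1 ≤ t → H ≤ D * t → t ≤ D * H → K ≤ t →
      H ^ (-ω) ≤ t ^ (-ω') := by
  refine ⟨max 1 (Real.exp (|ω| * Real.log D / (ω - ω'))), le_max_left _ _, ?_⟩
  intro H t hH ht h1 h2 hK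
  have hH0 : (0:ℝ) < H := by linarith
  have ht0 : (0:ℝ) < t := by linarith
  rw [Real.rpow_def_of_pos hH0, Real.rpow_def_of_pos ht0]
  apply Real.exp_le_exp.mpr
  have hd0 : 0 ≤ Real.log D := Real.log_nonneg hD
  have ha0 : 0 ≤ Real.log H := Real.log_nonneg hH
  have hb0 : 0 ≤ Real.log t := Real.log_nonneg ht
  have hab : Real.log H ≤ Real.log D + Real.log t := by
    calc Real.log H ≤ Real.log (D * t) := Real.log_le_log hH0 h1
      _ = Real.log D + Real.log t := Real.log_mul (by linarith) (by linarith)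
  have hba : Real.log t ≤ Real.log D + Real.log H := by
    calc Real.log t ≤ Real.log (D * H) := Real.log_le_log ht0 h2
      _ = Real.log D + Real.log H := Real.log_mul (by linarith) (by linarith)
  have hbK : |ω| * Real.log D / (ω - ω') ≤ Real.log t := by
    have h3 : Real.exp (|ω| * Real.log D / (ω - ω')) ≤ t := le_trans (le_max_right _ _) hK
    calc |ω| * Real.log D / (ω - ω') = Real.log (Real.exp (|ω| * Real.log D / (ω - ω'))) :=
          (Real.log_exp _).symm
      _ ≤ Real.log t := Real.log_le_log (Real.exp_pos _) h3
  have hωω : 0 < ω - ω' := by linarith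
  have hkey : |ω| * Real.log D ≤ (ω - ω') * Real.log t := by
    rw [div_le_iff₀ hωω] at hbK
    linarith [hbK]
  rcases le_or_gt 0 ω with hω | hω
  · have habs : |ω| = ω := abs_of_nonneg hω
    nlinarith [mul_le_mul_of_nonneg_left hba hω]
  · have habs : |ω| = -ω := abs_of_neg hω
    nlinarith [mul_le_mul_of_nonneg_left hab (by linarith : (0:ℝ) ≤ -ω)]

lemma dimH_le_of_transform (k : ℕ) (N r M : ℤ) (hr1 : N + 2 ≤ r) (hr2 : r ≤ N + 2 + k)
    (hM : 1 ≤ M) (s : Set ℝ) (hs : s ⊆ Set.Ico (N:ℝ) ((N:ℝ)+1)) :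
    dimH s ≤ dimH ((fun x : ℝ => ((M:ℝ) * (x - (r:ℝ)))⁻¹) '' s) := by
  set f : ℝ → ℝ := fun x => ((M:ℝ) * (x - (r:ℝ)))⁻¹ with hf
  set g : ℝ → ℝ := fun u => (r:ℝ) + ((M:ℝ) * u)⁻¹ with hg
  have hM0 : (0:ℝ) < (M:ℝ) := by exact_mod_cast (by omega : (0:ℤ) < M)
  have hM1 : (1:ℝ) ≤ (M:ℝ) := by exact_mod_cast hM
  have hbound : ∀ x ∈ s, 1 ≤ (r:ℝ) - x ∧ (r:ℝ) - x ≤ (k:ℝ) + 2 := by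
    intro x hx
    obtain ⟨hx1, hx2⟩ := hs hx
    have hra : ((N:ℝ) + 2) ≤ (r:ℝ) := by exact_mod_cast hr1
    have hrb : (r:ℝ) ≤ (N:ℝ) + 2 + (k:ℝ) := by exact_mod_cast hr2
    constructor <;> linarith
  have hgf : ∀ x ∈ s, g (f x) = x := by
    intro x hx
    have h1 := (hbound x hx).1
    have hxr : x - (r:ℝ) ≠ 0 := by intro h; rw [sub_eq_zero] at h; rw [h] at h1; linarith
    rw [hg, hf]
    simp only
    rw [show (M:ℝ) * ((M:ℝ) * (x - (r:ℝ)))⁻¹ = (x - (r:ℝ))⁻¹ by field_simp]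
    rw [inv_inv]; ring
  have hseq : g '' (f '' s) = s := by
    rw [Set.image_image]
    apply Set.eq_of_subset_of_subset
    · rintro y ⟨x, hx, rfl⟩
      show g (f x) ∈ s
      rw [hgf x hx]; exact hx
    · intro x hx; exact ⟨x, hx, hgf x hx⟩
  set K : NNReal := Real.toNNReal ((M:ℝ) * ((k:ℝ)+2)^2) with hK
  have hKcoe : (K:ℝ) = (M:ℝ) * ((k:ℝ)+2)^2 := Real.coe_toNNReal _ (by positivity)
  have hlip : LipschitzOnWith K g (f '' s) := by
    apply LipschitzOnWith.of_dist_le_mul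
    rintro u ⟨x, hx, rfl⟩ v ⟨y, hy, rfl⟩
    obtain ⟨hx1, hx2⟩ := hbound x hx
    obtain ⟨hy1, hy2⟩ := hbound y hy
    have hxr : x - (r:ℝ) ≠ 0 := by intro h; rw [sub_eq_zero] at h; rw [h] at hx1; linarith
    have hyr : y - (r:ℝ) ≠ 0 := by intro h; rw [sub_eq_zero] at h; rw [h] at hy1; linarith
    rw [Real.dist_eq, Real.dist_eq, hgf x hx, hgf y hy]
    have hdiff : f x - f y = (y - x) / ((M:ℝ) * (x - (r:ℝ)) * (y - (r:ℝ))) := by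
      rw [hf]; simp only; field_simp; ring
    have habs : |f x - f y| = |x - y| / ((M:ℝ) * (((r:ℝ) - x) * ((r:ℝ) - y))) := by
      rw [hdiff, abs_div]
      congr 1
      · rw [abs_sub_comm]
      · rw [abs_of_pos]
        · ring
        · have : (M:ℝ) * (x - (r:ℝ)) * (y - (r:ℝ)) = (M:ℝ) * (((r:ℝ) - x) * ((r:ℝ) - y)) := by ring
          rw [this]
          have h1 : 0 < ((r:ℝ) - x) * ((r:ℝ) - y) := by nlinarith
          positivity
    have hprod : ((r:ℝ)-x)*((r:ℝ)-y) ≤ ((k:ℝ)+2)^2 := by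
      have h9 := mul_le_mul hx2 hy2 (by linarith) (by linarith : (0:ℝ) ≤ (k:ℝ)+2)
      nlinarith [h9]
    have hprodpos : 0 < ((r:ℝ)-x)*((r:ℝ)-y) := by nlinarith
    have hden : (M:ℝ) * (((r:ℝ) - x) * ((r:ℝ) - y)) ≤ (M:ℝ) * ((k:ℝ)+2)^2 :=
      mul_le_mul_of_nonneg_left hprod (le_of_lt hM0)
    have hdenpos : 0 < (M:ℝ) * (((r:ℝ) - x) * ((r:ℝ) - y)) := mul_pos hM0 hprodpos
    calc |x - y| = |f x - f y| * ((M:ℝ) * (((r:ℝ) - x) * ((r:ℝ) - y))) := by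
          rw [habs, div_mul_cancel₀]
          exact ne_of_gt hdenpos
      _ ≤ |f x - f y| * ((M:ℝ) * ((k:ℝ)+2)^2) := by
          apply mul_le_mul_of_nonneg_left hden (abs_nonneg _)
      _ = (K:ℝ) * |f x - f y| := by rw [hKcoe]; ring
  calc dimH s = dimH (g '' (f '' s)) := by rw [hseq]
    _ ≤ dimH (f '' s) := hlip.dimH_image_le

lemma cover_lemma (k : ℕ) (w : ℝ) (C : ℤ → ℝ)
    (hC : ∀ N : ℤ, ∀ P : Polynomial ℤ, P.natDegree ≤ k →
      ∃ i : Fin (k+1), intPolyNorm P ≤ C N * |((P.eval (N + 2 + (i:ℕ)) : ℤ) : ℝ)|)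
    {ξ : ℝ} (hξ : (w : EReal) ≤ omegaExp k ξ) :
    ∃ i : Fin (k+1), ∀ ω : ℝ, ω < w →
      {P : Polynomial ℤ | P ≠ 0 ∧ P.natDegree ≤ k ∧
        |Polynomial.aeval ξ P| ≤ intPolyNorm P ^ (-ω) ∧
        intPolyNorm P ≤ C ⌊ξ⌋ * |((P.eval (⌊ξ⌋ + 2 + (i:ℕ)) : ℤ) : ℝ)|}.Infinite := by
  set N : ℤ := ⌊ξ⌋
  have hS := (omegaExp_ge_iff k ξ w).mp hξ
  set T : ℝ → Fin (k+1) → Set (Polynomial ℤ) := fun ω i =>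
    {P : Polynomial ℤ | P ≠ 0 ∧ P.natDegree ≤ k ∧
      |Polynomial.aeval ξ P| ≤ intPolyNorm P ^ (-ω) ∧
      intPolyNorm P ≤ C N * |((P.eval (N + 2 + (i:ℕ)) : ℤ) : ℝ)|} with hT
  have hexists : ∀ ω : ℝ, ω < w → ∃ i, (T ω i).Infinite := by
    intro ω hω
    by_contra h
    push_neg at h
    apply hS ω hω
    apply Set.Finite.subset (Set.finite_iUnion h)
    intro P hP
    obtain ⟨i, hi⟩ := hC N P hP.2.1
    exact Set.mem_iUnion.mpr ⟨i, hP.1, hP.2.1, hP.2.2, hi⟩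
  set I : ℝ → Set (Fin (k+1)) := fun ω => {i | (T ω i).Infinite} with hI
  have hanti : ∀ ω₁ ω₂ : ℝ, ω₁ ≤ ω₂ → I ω₂ ⊆ I ω₁ := by
    intro ω₁ ω₂ h12 i hi
    refine Set.Infinite.mono ?_ hi
    rintro P ⟨h1, h2, h3, h4⟩
    exact ⟨h1, h2, le_trans h3 (rpow_mono_exp h1 h12), h4⟩
  have hne : ∀ ω : ℝ, ω < w → (I ω).Nonempty := fun ω hω => hexists ω hω
  have hfin : ∀ ω : ℝ, (I ω).Finite := fun ω => Set.toFinite _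
  -- pick ω₀ with minimal ncard
  have hex : ∃ n : ℕ, ∃ ω : ℝ, ω < w ∧ (I ω).ncard = n := ⟨(I (w-1)).ncard, w-1, by linarith, rfl⟩
  classical
  set n₀ := Nat.find hex with hn₀
  obtain ⟨ω₀, hω₀, hcard₀⟩ := Nat.find_spec hex
  obtain ⟨i, hi⟩ := hne ω₀ hω₀
  refine ⟨i, ?_⟩
  intro ω hω
  have hω₂ : max ω ω₀ < w := by simp [hω, hω₀]
  have hsub₀ : I (max ω ω₀) ⊆ I ω₀ := hanti _ _ (le_max_right _ _)
  have hsubω : I (max ω ω₀) ⊆ I ω := hanti _ _ (le_max_left _ _)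
  have hmin : n₀ ≤ (I (max ω ω₀)).ncard := Nat.find_min' hex ⟨max ω ω₀, hω₂, rfl⟩
  have heq : I (max ω ω₀) = I ω₀ :=
    Set.eq_of_subset_of_ncard_le hsub₀ (by omega) (hfin _)
  have : i ∈ I ω := hsubω (heq ▸ hi)
  exact this

set_option maxHeartbeats 1600000 in
lemma image_step (k : ℕ) (w : ℝ) (N : ℤ) (i : Fin (k+1))
    (cN c' : ℝ) (hcN : 1 ≤ cN) (hc' : 1 ≤ c')
    (hC' : ∀ P : Polynomial ℤ, P.natDegree ≤ k → ∀ j : ℕ,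
      |(((P.comp (X + C (N + 2 + (i:ℕ)))).coeff j : ℤ) : ℝ)| ≤ c' * intPolyNorm P)
    (M : ℤ) (hM1 : 1 ≤ M) (hMge : cN * c' ≤ (M:ℝ))
    {ξ : ℝ} (hξIco : ξ ∈ Set.Ico (N:ℝ) ((N:ℝ)+1))
    (hξ : ∀ ω : ℝ, ω < w → {P : Polynomial ℤ | P ≠ 0 ∧ P.natDegree ≤ k ∧
        |Polynomial.aeval ξ P| ≤ intPolyNorm P ^ (-ω) ∧
        intPolyNorm P ≤ cN * |((P.eval (N + 2 + (i:ℕ)) : ℤ) : ℝ)|}.Infinite) :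
    (w : EReal) ≤ omegaLeadExp k (((M:ℝ) * (ξ - ((N + 2 + (i:ℕ) : ℤ) : ℝ)))⁻¹) := by
  set r : ℤ := N + 2 + (i:ℕ) with hr
  set ζ : ℝ := ((M:ℝ) * (ξ - (r:ℝ)))⁻¹ with hζ
  have hM0 : M ≠ 0 := by omega
  have hMR1 : (1:ℝ) ≤ (M:ℝ) := by exact_mod_cast hM1
  have hMRk : (1:ℝ) ≤ (M:ℝ)^k := one_le_pow₀ hMR1
  have hrR : ((N:ℝ) + 2) ≤ (r:ℝ) := by rw [hr]; push_cast; linarith [Nat.cast_nonneg (α := ℝ) (i:ℕ)]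
  have hξr : ξ ≠ (r:ℝ) := by
    obtain ⟨h1, h2⟩ := hξIco
    intro h; rw [h] at h2; linarith
  have hξr1 : 1 ≤ (r:ℝ) - ξ := by
    obtain ⟨h1, h2⟩ := hξIco
    linarith
  rw [omegaLeadExp_ge_iff]
  intro ω' hω'
  set ω : ℝ := (ω' + w)/2 with hω
  have hωw : ω < w := by rw [hω]; linarith
  have hω'ω : ω' < ω := by rw [hω]; linarith
  set D : ℝ := max (c' * (M:ℝ)^k) cN with hD
  have hD1 : 1 ≤ D := le_trans hcN (le_max_right _ _)
  have hD0 : 0 < D := by linarith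
  obtain ⟨K, hK1, hKprop⟩ := rpow_trick hD1 hω'ω
  have hT := hξ ω hωw
  set T' : Set (Polynomial ℤ) :=
    {P : Polynomial ℤ | P ≠ 0 ∧ P.natDegree ≤ k ∧
      |Polynomial.aeval ξ P| ≤ intPolyNorm P ^ (-ω) ∧
      intPolyNorm P ≤ cN * |((P.eval r : ℤ) : ℝ)|} \
      {P : Polynomial ℤ | P.natDegree ≤ k ∧ ht P ≤ ⌈D * K⌉₊} with hT'def
  have hT'inf : T'.Infinite := Set.Infinite.diff hT (finite_bounded k ⌈D * K⌉₊)
  have hT'sub : T' ⊆ {P : Polynomial ℤ | P.natDegree ≤ k} := fun P hP => hP.1.2.1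
  have hinj : Set.InjOn (Qpoly k M r) T' := (Qpoly_injOn k hM0 r).mono hT'sub
  have himg : (Qpoly k M r) '' T' ⊆
      {Q : Polynomial ℤ | Q ≠ 0 ∧ Q.natDegree ≤ k ∧
        ((Q.coeff k).natAbs : ℝ) = intPolyNorm Q ∧
        |Polynomial.aeval ζ Q| ≤ intPolyNorm Q ^ (-ω')} := by
    rintro _ ⟨P, hP, rfl⟩
    obtain ⟨⟨hP0, hdeg, happrox, hnode⟩, hnotsmall⟩ := hP
    set a : ℕ → ℤ := fun j => (P.comp (X + C r)).coeff j with ha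
    set H : ℝ := intPolyNorm P with hH
    have hH1 : 1 ≤ H := one_le_intPolyNorm hP0
    -- P is large
    have hbig : D * K ≤ H := by
      have h1 : ¬ (P.natDegree ≤ k ∧ ht P ≤ ⌈D * K⌉₊) := hnotsmall
      have h2 : ⌈D * K⌉₊ < ht P := by
        by_contra h3
        exact h1 ⟨hdeg, by omega⟩
      calc D * K ≤ (⌈D * K⌉₊ : ℝ) := Nat.le_ceil _
        _ ≤ (ht P : ℝ) := by exact_mod_cast Nat.le_of_lt h2
        _ = H := (intPolyNorm_eq P).symm
    -- a 0 = P.eval r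
    have ha0 : a 0 = P.eval r := by
      rw [ha]
      simp only
      rw [Polynomial.coeff_zero_eq_eval_zero, Polynomial.eval_comp]
      simp
    have hnode' : H ≤ cN * |((a 0 : ℤ) : ℝ)| := by rw [ha0]; exact hnode
    have ha0ne : a 0 ≠ 0 := by
      intro h
      rw [h] at hnode'
      simp at hnode'
      linarith
    have habs0R : ∀ j : ℕ, |((a j : ℤ) : ℝ)| ≤ c' * H := fun j => hC' P hdeg j
    -- coefficient comparison over ℤ
    have hMa : ∀ j, j ≤ k → |a j| ≤ M ^ j * |a 0| := by
      intro j hj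
      rcases Nat.eq_zero_or_pos j with h0 | h0
      · subst h0; simp
      · have hreal : |((a j : ℤ) : ℝ)| ≤ (M:ℝ) ^ j * |((a 0 : ℤ) : ℝ)| := by
          have h1 : |((a j : ℤ) : ℝ)| ≤ c' * H := habs0R j
          have h2 : H ≤ cN * |((a 0 : ℤ) : ℝ)| := hnode'
          have h3 : c' * H ≤ c' * (cN * |((a 0 : ℤ) : ℝ)|) :=
            mul_le_mul_of_nonneg_left h2 (by linarith)
          have h4 : (M:ℝ) ≤ (M:ℝ) ^ j := le_self_pow₀ hMR1 (by omega)
          have ha0abs : (1:ℝ) ≤ cN * |((a 0 : ℤ) : ℝ)| := le_trans hH1 h2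
          have ha0pos : (0:ℝ) < |((a 0 : ℤ) : ℝ)| := by
            rcases lt_or_ge 0 (|((a 0 : ℤ) : ℝ)|) with h | h
            · exact h
            · exfalso; nlinarith
          calc |((a j : ℤ) : ℝ)| ≤ (cN * c') * |((a 0 : ℤ) : ℝ)| := by nlinarith
            _ ≤ (M:ℝ) * |((a 0 : ℤ) : ℝ)| := mul_le_mul_of_nonneg_right hMge (by positivity)
            _ ≤ (M:ℝ) ^ j * |((a 0 : ℤ) : ℝ)| := mul_le_mul_of_nonneg_right h4 (by positivity)
        have : ((|a j| : ℤ) : ℝ) ≤ ((M ^ j * |a 0| : ℤ) : ℝ) := by push_cast; exact_mod_cast hreal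
        exact_mod_cast this
    set Q : Polynomial ℤ := Qpoly k M r P with hQ
    have hQdeg : Q.natDegree ≤ k := Qpoly_natDegree_le k M r P
    have hQcoeffk : Q.coeff k = a 0 * M ^ k := by
      rw [hQ, Qpoly_coeff k M r P (le_refl k), Nat.sub_self]
    have hQne : Q ≠ 0 := by
      intro h
      apply ha0ne
      have : Q.coeff k = 0 := by rw [h]; simp
      rw [hQcoeffk] at this
      exact (mul_eq_zero.mp this).resolve_right (pow_ne_zero k hM0)
    have hht : ht Q = (a 0 * M ^ k).natAbs := Qpoly_ht k hM1 P hMa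
    have hlead : ((Q.coeff k).natAbs : ℝ) = intPolyNorm Q := by
      rw [hQcoeffk, intPolyNorm_eq, hht]
    set t : ℝ := intPolyNorm Q with htQ
    have ht1 : 1 ≤ t := one_le_intPolyNorm hQne
    have htval : t = |((a 0 : ℤ) : ℝ)| * (M:ℝ)^k := by
      rw [htQ, intPolyNorm_eq, hht]
      push_cast [Nat.cast_natAbs]
      push_cast
      rw [abs_mul, abs_pow, abs_of_pos (by exact_mod_cast (by omega : (0:ℤ) < M) : (0:ℝ) < (M:ℝ))]
    have htle : t ≤ D * H := by
      rw [htval]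
      calc |((a 0 : ℤ) : ℝ)| * (M:ℝ)^k ≤ (c' * H) * (M:ℝ)^k :=
            mul_le_mul_of_nonneg_right (habs0R 0) (by positivity)
        _ = (c' * (M:ℝ)^k) * H := by ring
        _ ≤ D * H := mul_le_mul_of_nonneg_right (le_max_left _ _) (by linarith)
    have hHle : H ≤ D * t := by
      have h1 : |((a 0 : ℤ) : ℝ)| ≤ t := by
        rw [htval]
        nlinarith [abs_nonneg ((a 0 : ℤ) : ℝ)]
      calc H ≤ cN * |((a 0 : ℤ) : ℝ)| := hnode'
        _ ≤ cN * t := mul_le_mul_of_nonneg_left h1 (by linarith)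
        _ ≤ D * t := mul_le_mul_of_nonneg_right (le_max_right _ _) (by linarith)
    have hKt : K ≤ t := by
      have : D * K ≤ D * t := le_trans hbig hHle
      exact le_of_mul_le_mul_left this hD0
    have happrox2 : |Polynomial.aeval ζ Q| ≤ |Polynomial.aeval ξ P| := by
      have hid := Qpoly_aeval k hM0 P hdeg hξr
      rw [hζ, hQ]
      have h2 : |Polynomial.aeval ξ P| =
          |ξ - (r:ℝ)|^k * |Polynomial.aeval (((M:ℝ) * (ξ - (r:ℝ)))⁻¹) (Qpoly k M r P)| := by
        rw [← abs_pow, ← abs_mul, hid]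
      rw [h2]
      have h3 : 1 ≤ |ξ - (r:ℝ)|^k := by
        apply one_le_pow₀
        rw [abs_sub_comm]
        calc (1:ℝ) ≤ (r:ℝ) - ξ := hξr1
          _ ≤ |(r:ℝ) - ξ| := le_abs_self _
      nlinarith [abs_nonneg (Polynomial.aeval (((M:ℝ) * (ξ - (r:ℝ)))⁻¹) (Qpoly k M r P)), h3]
    refine ⟨hQne, hQdeg, hlead, ?_⟩
    calc |Polynomial.aeval ζ Q| ≤ |Polynomial.aeval ξ P| := happrox2
      _ ≤ H ^ (-ω) := happrox
      _ ≤ t ^ (-ω') := hKprop H t hH1 ht1 hHle htle hKt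
  exact Set.Infinite.mono himg (Set.Infinite.image hinj hT'inf)

end Cor2

/-- The sets `{ξ : ω_k(ξ) ≥ w}` and `{ξ : ω_k^lead(ξ) ≥ w}` have the same
Hausdorff dimension. -/
theorem corollary2_ge (k : ℕ) (hk : 1 ≤ k) (w : ℝ) :
    dimH {ξ : ℝ | (w : EReal) ≤ omegaExp k ξ} =
      dimH {ξ : ℝ | (w : EReal) ≤ omegaLeadExp k ξ} := by
  apply le_antisymm
  · -- hard direction
    choose C hC1 hC using fun N => Cor2.exists_node k N
    choose C' hC'1 hC' using fun r => Cor2.exists_shift k r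
    set node : ℤ × Fin (k+1) → ℤ := fun q => q.1 + 2 + ((q.2:ℕ):ℤ) with hnode
    set M : ℤ × Fin (k+1) → ℤ := fun q => ⌈C q.1 * C' (node q)⌉ + 1 with hM
    have hM1 : ∀ q, 1 ≤ M q := by
      intro q
      have h1 : (1:ℝ) ≤ C q.1 * C' (node q) := by nlinarith [hC1 q.1, hC'1 (node q)]
      have h2 := Int.le_ceil (C q.1 * C' (node q))
      have h4 : (1:ℝ) ≤ (⌈C q.1 * C' (node q)⌉ : ℝ) := le_trans h1 h2
      have h3 : (1:ℤ) ≤ ⌈C q.1 * C' (node q)⌉ := by exact_mod_cast h4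
      show 1 ≤ ⌈C q.1 * C' (node q)⌉ + 1
      omega
    have hMge : ∀ q, C q.1 * C' (node q) ≤ ((M q : ℤ) : ℝ) := by
      intro q
      rw [hM]
      push_cast
      linarith [Int.le_ceil (C q.1 * C' (node q))]
    set E : ℤ × Fin (k+1) → Set ℝ := fun q =>
      {ξ : ℝ | ξ ∈ Set.Ico ((q.1:ℤ):ℝ) (((q.1:ℤ):ℝ)+1) ∧ ∀ ω : ℝ, ω < w →
        {P : Polynomial ℤ | P ≠ 0 ∧ P.natDegree ≤ k ∧
          |Polynomial.aeval ξ P| ≤ intPolyNorm P ^ (-ω) ∧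
          intPolyNorm P ≤ C q.1 * |((P.eval (q.1 + 2 + ((q.2:ℕ):ℤ)) : ℤ) : ℝ)|}.Infinite} with hE
    have hcover : {ξ : ℝ | (w : EReal) ≤ omegaExp k ξ} ⊆ ⋃ q, E q := by
      intro ξ hξ
      obtain ⟨i, hi⟩ := Cor2.cover_lemma k w C hC hξ
      apply Set.mem_iUnion.mpr
      refine ⟨(⌊ξ⌋, i), ⟨⟨Int.floor_le ξ, Int.lt_floor_add_one ξ⟩, ?_⟩⟩
      exact hi
    calc dimH {ξ : ℝ | (w : EReal) ≤ omegaExp k ξ}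
        ≤ dimH (⋃ q, E q) := dimH_mono hcover
      _ = ⨆ q, dimH (E q) := dimH_iUnion E
      _ ≤ dimH {ξ : ℝ | (w : EReal) ≤ omegaLeadExp k ξ} := by
          apply iSup_le
          rintro ⟨N, i⟩
          have hsub : E (N, i) ⊆ Set.Ico ((N:ℤ):ℝ) (((N:ℤ):ℝ)+1) := fun ξ h => h.1
          have himg : (fun x : ℝ => (((M (N,i) : ℤ):ℝ) * (x - ((node (N,i) : ℤ):ℝ)))⁻¹) '' E (N,i) ⊆
              {ξ : ℝ | (w : EReal) ≤ omegaLeadExp k ξ} := by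
            rintro ζ ⟨ξ, ⟨hξI, hξP⟩, rfl⟩
            exact Cor2.image_step k w N i (C N) (C' (node (N,i))) (hC1 N) (hC'1 _)
              (fun P hP j => hC' (node (N,i)) P hP j) (M (N,i)) (hM1 (N,i)) (hMge (N,i)) hξI hξP
          calc dimH (E (N,i))
              ≤ dimH ((fun x : ℝ => (((M (N,i) : ℤ):ℝ) * (x - ((node (N,i) : ℤ):ℝ)))⁻¹) '' E (N,i)) := by
                apply Cor2.dimH_le_of_transform k N (node (N,i)) (M (N,i))
                · show N + 2 ≤ N + 2 + ((i:ℕ):ℤ)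
                  omega
                · show N + 2 + ((i:ℕ):ℤ) ≤ N + 2 + (k:ℤ)
                  have := i.isLt; omega
                · exact hM1 _
                · exact hsub
            _ ≤ _ := dimH_mono himg
  · apply dimH_mono
    intro ξ hξ
    exact le_trans hξ (Cor2.omegaLead_le_omega k ξ)
end

section
/- Let n ≥ 1 be an integer, let ξ be an irrational real number, let r be an integer with r ≠ ξ, and let M ≥ 1 be an integer. Then λ_n(1/(M(ξ − r))) = λ_n(ξ); that is, λ_n is invariant under this fractional linear transformation with rational coefficients. -/
open Polynomial Filter

def lamSet (n : ℕ) (ξ : ℝ) (l : ℝ) : Set (Fin (n + 1) → ℤ) :=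
  {x : Fin (n + 1) → ℤ | x ≠ 0 ∧ ∀ m : Fin (n + 1), 1 ≤ (m : ℕ) →
      |(x 0 : ℝ) * ξ ^ (m : ℕ) - (x m : ℝ)| ≤ vecNorm x ^ (-l)}

lemma vecNorm_nonneg {n : ℕ} (x : Fin (n + 1) → ℤ) : 0 ≤ vecNorm x :=
  Nat.cast_nonneg _

lemma abs_le_vecNorm {n : ℕ} (x : Fin (n + 1) → ℤ) (i : Fin (n + 1)) :
    |(x i : ℝ)| ≤ vecNorm x := by
  have h : (x i).natAbs ≤ (Finset.univ.sup fun i => (x i).natAbs) :=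
    Finset.le_sup (f := fun i => (x i).natAbs) (Finset.mem_univ i)
  calc |(x i : ℝ)| = ((x i).natAbs : ℝ) := by
        rw [Nat.cast_natAbs]; push_cast; ring
    _ ≤ _ := by unfold vecNorm; exact_mod_cast h

lemma exists_vecNorm_eq {n : ℕ} (x : Fin (n + 1) → ℤ) :
    ∃ i, vecNorm x = |(x i : ℝ)| := by
  obtain ⟨i, -, hi⟩ := Finset.exists_mem_eq_sup Finset.univ Finset.univ_nonempty
    (fun i => (x i).natAbs)
  exact ⟨i, by rw [vecNorm, hi, Nat.cast_natAbs]; push_cast; ring⟩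

lemma one_le_vecNorm {n : ℕ} {x : Fin (n + 1) → ℤ} (hx : x ≠ 0) : 1 ≤ vecNorm x := by
  have : ∃ i, x i ≠ 0 := by
    by_contra h; push_neg at h; exact hx (funext h)
  obtain ⟨i, hi⟩ := this
  have h1 : (1 : ℝ) ≤ |(x i : ℝ)| := by
    have : (1 : ℤ) ≤ |x i| := Int.one_le_abs hi
    calc (1:ℝ) ≤ ((|x i| : ℤ) : ℝ) := by exact_mod_cast this
      _ = |(x i : ℝ)| := by push_cast; ring
  exact h1.trans (abs_le_vecNorm x i)

lemma infinite_of_unbounded {n : ℕ} {S : Set (Fin (n + 1) → ℤ)}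
    (h : ∀ B : ℝ, ∃ x ∈ S, B < vecNorm x) : S.Infinite := by
  by_contra hinf
  rw [Set.not_infinite] at hinf
  obtain ⟨B, hB⟩ := (hinf.image vecNorm).bddAbove
  obtain ⟨x, hxS, hx⟩ := h B
  exact absurd (hB (Set.mem_image_of_mem _ hxS)) (not_le.2 hx)

lemma exists_large_of_infinite {n : ℕ} {S : Set (Fin (n + 1) → ℤ)}
    (h : S.Infinite) : ∀ B : ℝ, ∃ x ∈ S, B < vecNorm x := by
  intro B
  by_contra hc
  push_neg at hc
  apply h
  have hsub : S ⊆ Set.univ.pi (fun _ : Fin (n+1) => Set.Icc (-⌈B⌉) ⌈B⌉) := by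
    intro x hx i _
    have h1 : |(x i : ℝ)| ≤ B := (abs_le_vecNorm x i).trans (hc x hx)
    have h2 : |x i| ≤ ⌈B⌉ := by
      have : ((|x i| : ℤ) : ℝ) ≤ ⌈B⌉ := by
        push_cast
        calc |(x i : ℝ)| ≤ B := h1
          _ ≤ ⌈B⌉ := Int.le_ceil B
      exact_mod_cast this
    exact Set.mem_Icc.2 (abs_le.1 h2)
  exact Set.Finite.subset (Set.Finite.pi (fun i => Set.finite_Icc _ _)) hsub

lemma lamSet_nonpos_infinite (n : ℕ) (ξ : ℝ) {l : ℝ} (hl : l ≤ 0) :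
    (lamSet n ξ l).Infinite := by
  apply Set.infinite_of_injective_forall_mem
    (f := fun N : ℕ => (fun m : Fin (n+1) => round (((N:ℝ)+1) * ξ ^ (m:ℕ))))
  · intro N N' h
    have h0 := congrFun h 0
    simp only [Fin.val_zero, pow_zero, mul_one] at h0
    have hN : round ((N:ℝ)+1) = round ((N':ℝ)+1) := h0
    have e1 : round ((N:ℝ)+1) = (N:ℤ)+1 := by
      rw [show ((N:ℝ)+1) = (((N:ℤ)+1 : ℤ) : ℝ) by push_cast; ring, round_intCast]
    have e2 : round ((N':ℝ)+1) = (N':ℤ)+1 := by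
      rw [show ((N':ℝ)+1) = (((N':ℤ)+1 : ℤ) : ℝ) by push_cast; ring, round_intCast]
    rw [e1, e2] at hN
    exact_mod_cast (by omega : (N:ℤ) = N')
  · intro N
    set x : Fin (n+1) → ℤ := fun m => round (((N:ℝ)+1) * ξ ^ (m:ℕ)) with hx
    have hx0 : x 0 = (N:ℤ) + 1 := by
      simp [hx]
    have hxne : x ≠ 0 := by
      intro h
      have := congrFun h 0
      rw [hx0] at this
      simp at this
      omega
    refine ⟨hxne, fun m hm => ?_⟩
    have h1 : |(x 0 : ℝ) * ξ ^ (m:ℕ) - (x m : ℝ)| ≤ 1 / 2 := by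
      rw [hx0]
      push_cast
      have := abs_sub_round (((N:ℝ)+1) * ξ ^ (m:ℕ))
      rw [abs_sub_comm] at this
      rw [abs_sub_comm]
      simpa [hx] using this
    have h2 : (1:ℝ) ≤ vecNorm x ^ (-l) :=
      Real.one_le_rpow (one_le_vecNorm hxne) (by linarith)
    linarith

lemma lambdaExp_eq (n : ℕ) (ξ : ℝ) :
    lambdaExp n ξ = sSup (Real.toEReal '' {l : ℝ | (lamSet n ξ l).Infinite}) := rfl

set_option maxHeartbeats 1000000 in
/-- Main transfer lemma. -/
lemma transfer (n : ℕ) (ξ : ℝ) (a b c d : ℤ) (hcd : (c:ℝ) * ξ + d ≠ 0)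
    {l l' : ℝ} (hl' : 0 < l') (hll' : l' < l)
    (h : (lamSet n ξ l).Infinite) :
    (lamSet n (((a:ℝ) * ξ + b) / ((c:ℝ) * ξ + d)) l').Infinite := by
  set η : ℝ := ((a:ℝ) * ξ + b) / ((c:ℝ) * ξ + d) with hη
  set P : Fin (n+1) → Polynomial ℤ :=
    fun m => (C a * X + C b) ^ (m:ℕ) * (C c * X + C d) ^ (n - (m:ℕ)) with hP
  set T : (Fin (n+1) → ℤ) → (Fin (n+1) → ℤ) :=
    fun x m => ∑ j : Fin (n+1), (P m).coeff (j:ℕ) * x j with hT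
  set K0 : ℝ := 1 + ∑ m : Fin (n+1), ∑ j : Fin (n+1), |((P m).coeff (j:ℕ) : ℝ)| with hK0
  have hK0one : 1 ≤ K0 := by
    rw [hK0]
    have : (0:ℝ) ≤ ∑ m : Fin (n+1), ∑ j : Fin (n+1), |((P m).coeff (j:ℕ) : ℝ)| := by
      positivity
    linarith
  have hK0pos : 0 < K0 := by linarith
  have hK0m : ∀ m : Fin (n+1), ∑ j : Fin (n+1), |((P m).coeff (j:ℕ) : ℝ)| ≤ K0 := by
    intro m
    rw [hK0]
    have h1 : ∑ j : Fin (n+1), |((P m).coeff (j:ℕ) : ℝ)| ≤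
        ∑ m : Fin (n+1), ∑ j : Fin (n+1), |((P m).coeff (j:ℕ) : ℝ)| :=
      Finset.single_le_sum (f := fun m => ∑ j : Fin (n+1), |((P m).coeff (j:ℕ) : ℝ)|)
        (fun i _ => by positivity) (Finset.mem_univ m)
    linarith
  -- degree bound
  have hdeg : ∀ m : Fin (n+1), (P m).natDegree < n + 1 := by
    intro m
    have h1 : (C a * X + C b).natDegree ≤ 1 := Polynomial.natDegree_linear_le
    have h2 : (C c * X + C d).natDegree ≤ 1 := Polynomial.natDegree_linear_le
    have := Polynomial.natDegree_mul_le (p := (C a * X + C b) ^ (m:ℕ))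
      (q := (C c * X + C d) ^ (n - (m:ℕ)))
    have p1 := Polynomial.natDegree_pow_le (p := C a * X + C b) (n := (m:ℕ))
    have p2 := Polynomial.natDegree_pow_le (p := C c * X + C d) (n := n - (m:ℕ))
    have hm : (m:ℕ) ≤ n := Fin.is_le m
    calc (P m).natDegree ≤ _ := this
      _ ≤ (m:ℕ) * 1 + (n - (m:ℕ)) * 1 := by
          apply add_le_add
          · exact p1.trans (Nat.mul_le_mul_left _ h1)
          · exact p2.trans (Nat.mul_le_mul_left _ h2)
      _ < n + 1 := by omega
  -- evaluation identity
  have heval : ∀ m : Fin (n+1),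
      ∑ j : Fin (n+1), ((P m).coeff (j:ℕ) : ℝ) * ξ ^ (j:ℕ)
        = ((c:ℝ)*ξ+d)^n * η^(m:ℕ) := by
    intro m
    have hm : (m:ℕ) ≤ n := Fin.is_le m
    have h1 : (Polynomial.aeval ξ) (P m) =
        ∑ i ∈ Finset.range (n+1), ((P m).coeff i : ℝ) * ξ ^ i := by
      rw [Polynomial.aeval_eq_sum_range' (hdeg m) ξ]
      apply Finset.sum_congr rfl
      intro i _
      rw [zsmul_eq_mul]
    have h2 : (Polynomial.aeval ξ) (P m) = ((a:ℝ)*ξ+b)^(m:ℕ) * ((c:ℝ)*ξ+d)^(n-(m:ℕ)) := by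
      rw [hP]
      simp [map_mul, map_pow, map_add, Polynomial.aeval_X, Polynomial.aeval_C]
    have h3 : ((a:ℝ)*ξ+b) = η * ((c:ℝ)*ξ+d) := by
      rw [hη, div_mul_cancel₀ _ hcd]
    have h4 : ((a:ℝ)*ξ+b)^(m:ℕ) * ((c:ℝ)*ξ+d)^(n-(m:ℕ)) = ((c:ℝ)*ξ+d)^n * η^(m:ℕ) := by
      rw [h3, mul_pow]
      rw [show ((c:ℝ)*ξ+d)^n = ((c:ℝ)*ξ+d)^((m:ℕ)) * ((c:ℝ)*ξ+d)^(n-(m:ℕ)) by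
        rw [← pow_add]; congr 1; omega]
      ring
    rw [Fin.sum_univ_eq_sum_range (fun j => ((P m).coeff j : ℝ) * ξ ^ j), ← h1, h2, h4]
  -- constants
  set Cξ : ℝ := (1 + |ξ|)^n with hCξ
  have hCξ1 : 1 ≤ Cξ := by
    rw [hCξ]
    apply one_le_pow₀
    have := abs_nonneg ξ
    linarith
  set KA : ℝ := |((c:ℝ)*ξ+d)^n| with hKA
  have hKApos : 0 < KA := abs_pos.2 (pow_ne_zero _ hcd)
  set Cη : ℝ := (1 + |η|)^n with hCη
  have hCη1 : 1 ≤ Cη := by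
    rw [hCη]; apply one_le_pow₀; have := abs_nonneg η; linarith
  set C3 : ℝ := (1 + Cη) * K0 with hC3
  have hC3pos : 0 < C3 := mul_pos (by linarith) hK0pos
  set D : ℝ := C3 * K0 ^ l' with hD
  have hDpos : 0 < D := mul_pos hC3pos (Real.rpow_pos_of_pos hK0pos _)
  apply infinite_of_unbounded
  intro Bd
  set B : ℝ := max ((max Bd 1 + K0)/KA * Cξ + 1) (D ^ (1/(l-l'))) with hB
  obtain ⟨x, hxS, hxB⟩ := exists_large_of_infinite h B
  obtain ⟨hxne, hxapp⟩ := hxS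
  set X := vecNorm x with hX
  have hX1 : 1 ≤ X := one_le_vecNorm hxne
  have hX0 : 0 < X := by linarith
  set ε : ℝ := X ^ (-l) with hε
  have hε0 : 0 ≤ ε := Real.rpow_nonneg (by linarith) _
  have hε1 : ε ≤ 1 := Real.rpow_le_one_of_one_le_of_nonpos hX1 (by linarith)
  have hxerr : ∀ j : Fin (n+1), |(x j : ℝ) - (x 0:ℝ) * ξ^(j:ℕ)| ≤ ε := by
    intro j
    rcases Nat.eq_zero_or_pos (j:ℕ) with h0 | h0
    · have hj : j = 0 := Fin.ext (by simpa using h0)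
      rw [hj]
      simpa using hε0
    · rw [abs_sub_comm]
      exact hxapp j h0
  have hcastT : ∀ m : Fin (n+1),
      (T x m : ℝ) = ∑ j : Fin (n+1), ((P m).coeff (j:ℕ) : ℝ) * (x j : ℝ) := by
    intro m
    simp only [hT]
    push_cast
    ring
  have E1 : ∀ m : Fin (n+1),
      |(T x m : ℝ) - (x 0:ℝ) * (((c:ℝ)*ξ+d)^n * η^(m:ℕ))| ≤ K0 * ε := by
    intro m
    have hexp : (x 0:ℝ) * (((c:ℝ)*ξ+d)^n * η^(m:ℕ))
        = ∑ j : Fin (n+1), ((P m).coeff (j:ℕ) : ℝ) * ((x 0:ℝ) * ξ^(j:ℕ)) := by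
      rw [← heval m, Finset.mul_sum]
      apply Finset.sum_congr rfl; intro j _; ring
    rw [hcastT m, hexp, ← Finset.sum_sub_distrib]
    calc |∑ j : Fin (n+1), (((P m).coeff (j:ℕ) : ℝ) * (x j:ℝ)
            - ((P m).coeff (j:ℕ):ℝ) * ((x 0:ℝ)*ξ^(j:ℕ)))|
        ≤ ∑ j : Fin (n+1), |((P m).coeff (j:ℕ):ℝ) * (x j:ℝ)
            - ((P m).coeff (j:ℕ):ℝ) * ((x 0:ℝ)*ξ^(j:ℕ))| :=
          Finset.abs_sum_le_sum_abs _ _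
      _ ≤ ∑ j : Fin (n+1), |((P m).coeff (j:ℕ):ℝ)| * ε := by
          apply Finset.sum_le_sum; intro j _
          rw [← mul_sub, abs_mul]
          exact mul_le_mul_of_nonneg_left (hxerr j) (abs_nonneg _)
      _ = (∑ j : Fin (n+1), |((P m).coeff (j:ℕ):ℝ)|) * ε := by rw [Finset.sum_mul]
      _ ≤ K0 * ε := mul_le_mul_of_nonneg_right (hK0m m) hε0
  have hm0 : |(T x 0 : ℝ) - (x 0:ℝ) * ((c:ℝ)*ξ+d)^n| ≤ K0 * ε := by
    have := E1 0
    simpa using this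
  have E2 : ∀ m : Fin (n+1), |(T x 0 : ℝ) * η^(m:ℕ) - (T x m : ℝ)| ≤ C3 * ε := by
    intro m
    have hpow : |η|^(m:ℕ) ≤ Cη := by
      rw [hCη]
      calc |η|^(m:ℕ) ≤ (1+|η|)^(m:ℕ) :=
            pow_le_pow_left₀ (abs_nonneg η) (by linarith) _
        _ ≤ (1+|η|)^n := pow_le_pow_right₀ (by linarith [abs_nonneg η]) (Fin.is_le m)
    have key : (T x 0:ℝ)*η^(m:ℕ) - (T x m:ℝ)
        = ((T x 0:ℝ) - (x 0:ℝ)*(((c:ℝ)*ξ+d)^n))*η^(m:ℕ)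
          - ((T x m:ℝ) - (x 0:ℝ)*(((c:ℝ)*ξ+d)^n*η^(m:ℕ))) := by ring
    rw [key]
    have h1 : |((T x 0:ℝ) - (x 0:ℝ)*(((c:ℝ)*ξ+d)^n))*η^(m:ℕ)| ≤ K0 * ε * Cη := by
      rw [abs_mul, abs_pow]
      apply mul_le_mul hm0 hpow (by positivity) (by positivity)
    calc |((T x 0:ℝ) - (x 0:ℝ)*(((c:ℝ)*ξ+d)^n))*η^(m:ℕ)
            - ((T x m:ℝ) - (x 0:ℝ)*(((c:ℝ)*ξ+d)^n*η^(m:ℕ)))|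
        ≤ |((T x 0:ℝ) - (x 0:ℝ)*(((c:ℝ)*ξ+d)^n))*η^(m:ℕ)|
          + |(T x m:ℝ) - (x 0:ℝ)*(((c:ℝ)*ξ+d)^n*η^(m:ℕ))| := abs_sub _ _
      _ ≤ K0 * ε * Cη + K0 * ε := add_le_add h1 (E1 m)
      _ = C3 * ε := by rw [hC3]; ring
  have E3 : vecNorm (T x) ≤ K0 * X := by
    obtain ⟨i, hi⟩ := exists_vecNorm_eq (T x)
    rw [hi, hcastT i]
    calc |∑ j : Fin (n+1), ((P i).coeff (j:ℕ) : ℝ) * (x j : ℝ)|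
        ≤ ∑ j : Fin (n+1), |((P i).coeff (j:ℕ) : ℝ) * (x j : ℝ)| :=
          Finset.abs_sum_le_sum_abs _ _
      _ ≤ ∑ j : Fin (n+1), |((P i).coeff (j:ℕ) : ℝ)| * X := by
          apply Finset.sum_le_sum; intro j _
          rw [abs_mul]
          exact mul_le_mul_of_nonneg_left (abs_le_vecNorm x j) (abs_nonneg _)
      _ = (∑ j : Fin (n+1), |((P i).coeff (j:ℕ):ℝ)|) * X := by rw [Finset.sum_mul]
      _ ≤ K0 * X := mul_le_mul_of_nonneg_right (hK0m i) (by linarith)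
  have E4 : X ≤ |(x 0 : ℝ)| * Cξ + 1 := by
    obtain ⟨i, hi⟩ := exists_vecNorm_eq x
    rw [hX, hi]
    have h1 : |(x i:ℝ)| ≤ ε + |(x 0:ℝ)*ξ^(i:ℕ)| := by
      calc |(x i:ℝ)| = |((x i:ℝ) - (x 0:ℝ)*ξ^(i:ℕ)) + (x 0:ℝ)*ξ^(i:ℕ)| := by
            congr 1; ring
        _ ≤ |(x i:ℝ) - (x 0:ℝ)*ξ^(i:ℕ)| + |(x 0:ℝ)*ξ^(i:ℕ)| := abs_add_le _ _
        _ ≤ ε + |(x 0:ℝ)*ξ^(i:ℕ)| := by linarith [hxerr i]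
    have h2 : |(x 0:ℝ)*ξ^(i:ℕ)| ≤ |(x 0:ℝ)| * Cξ := by
      rw [abs_mul, abs_pow]
      apply mul_le_mul_of_nonneg_left _ (abs_nonneg _)
      calc |ξ|^(i:ℕ) ≤ (1+|ξ|)^(i:ℕ) := pow_le_pow_left₀ (abs_nonneg ξ) (by linarith) _
        _ ≤ Cξ := by
            rw [hCξ]
            exact pow_le_pow_right₀ (by linarith [abs_nonneg ξ]) (Fin.is_le i)
    linarith
  have E5 : |(x 0:ℝ)| * KA - K0 ≤ |(T x 0 : ℝ)| := by
    have h1 : |(x 0:ℝ) * ((c:ℝ)*ξ+d)^n| - |(T x 0:ℝ)| ≤ K0 * ε :=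
      (abs_sub_abs_le_abs_sub _ _).trans (by rw [abs_sub_comm]; exact hm0)
    rw [abs_mul, ← hKA] at h1
    have h2 : K0 * ε ≤ K0 := by
      calc K0 * ε ≤ K0 * 1 := mul_le_mul_of_nonneg_left hε1 hK0pos.le
        _ = K0 := mul_one _
    linarith
  have hCξ0 : (0:ℝ) < Cξ := by linarith
  have hx0big : max Bd 1 + K0 < |(x 0:ℝ)| * KA := by
    have hB1 : (max Bd 1 + K0)/KA * Cξ + 1 ≤ B := le_max_left _ _
    have t1 : (max Bd 1 + K0)/KA * Cξ < X - 1 := by linarith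
    have t15 : (max Bd 1 + K0)/KA * Cξ < |(x 0:ℝ)| * Cξ := by linarith
    have t2 : (max Bd 1 + K0)/KA < |(x 0:ℝ)| := lt_of_mul_lt_mul_right t15 hCξ0.le
    exact (div_lt_iff₀ hKApos).1 t2
  have hTbig : max Bd 1 < |(T x 0 : ℝ)| := by linarith
  have hT1 : (1:ℝ) ≤ |(T x 0:ℝ)| := le_trans (le_max_right Bd 1) hTbig.le
  have hTne : T x ≠ 0 := by
    intro h0
    have h1 : (T x 0 : ℝ) = 0 := by rw [congrFun h0 0]; simp
    rw [h1] at hT1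
    norm_num at hT1
  have hvT1 : (1:ℝ) ≤ vecNorm (T x) := one_le_vecNorm hTne
  have hvTpos : (0:ℝ) < vecNorm (T x) := by linarith
  refine ⟨T x, ⟨hTne, fun m hm => ?_⟩, ?_⟩
  · -- approximation property
    have hXlow : D ^ (1/(l-l')) ≤ X := le_of_lt (lt_of_le_of_lt (le_max_right _ _) hxB)
    have he : (0:ℝ) < l - l' := by linarith
    have hDX : D ≤ X ^ (l - l') := by
      have h1 : (D ^ (1/(l-l')))^(l-l') ≤ X ^ (l-l') :=
        Real.rpow_le_rpow (Real.rpow_nonneg hDpos.le _) hXlow he.le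
      rwa [← Real.rpow_mul hDpos.le, one_div_mul_cancel he.ne', Real.rpow_one] at h1
    set u : ℝ := X ^ (l-l') with hu
    have hupos : 0 < u := Real.rpow_pos_of_pos hX0 _
    set v : ℝ := K0 ^ l' with hv
    have hvpos : 0 < v := Real.rpow_pos_of_pos hK0pos _
    have hDX' : C3 * v ≤ u := by rw [hv, ← hD]; exact hDX
    have h2 : C3 * u⁻¹ ≤ v⁻¹ := by
      rw [inv_eq_one_div, inv_eq_one_div, mul_one_div, div_le_div_iff₀ hupos hvpos]
      linarith
    have hεeq : ε = X ^ (-l') * u⁻¹ := by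
      rw [hε, hu, ← Real.rpow_neg hX0.le (l-l'), ← Real.rpow_add hX0]
      congr 1; ring
    have hstep1 : C3 * ε ≤ v⁻¹ * X ^ (-l') := by
      rw [hεeq]
      calc C3 * (X^(-l') * u⁻¹) = (C3 * u⁻¹) * X^(-l') := by ring
        _ ≤ v⁻¹ * X^(-l') :=
          mul_le_mul_of_nonneg_right h2 (Real.rpow_nonneg hX0.le _)
    have hstep2 : v⁻¹ * X ^ (-l') = (K0 * X) ^ (-l') := by
      rw [Real.mul_rpow hK0pos.le hX0.le, hv, Real.rpow_neg hK0pos.le]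
    have hstep3 : (K0 * X) ^ (-l') ≤ vecNorm (T x) ^ (-l') :=
      Real.rpow_le_rpow_of_nonpos hvTpos E3 (by linarith)
    calc |(T x 0 : ℝ) * η^(m:ℕ) - (T x m : ℝ)| ≤ C3 * ε := E2 m
      _ ≤ v⁻¹ * X ^ (-l') := hstep1
      _ = (K0 * X) ^ (-l') := hstep2
      _ ≤ vecNorm (T x) ^ (-l') := hstep3
  · -- large norm
    calc Bd ≤ max Bd 1 := le_max_left _ _
      _ < |(T x 0:ℝ)| := hTbig
      _ ≤ vecNorm (T x) := abs_le_vecNorm (T x) 0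


lemma lambdaExp_le_of_transfer (n : ℕ) (ξ η : ℝ)
    (h : ∀ l l' : ℝ, 0 < l' → l' < l → (lamSet n ξ l).Infinite → (lamSet n η l').Infinite) :
    lambdaExp n ξ ≤ lambdaExp n η := by
  rw [lambdaExp_eq, lambdaExp_eq]
  apply sSup_le
  rintro e ⟨l, hl, rfl⟩
  apply le_of_forall_lt
  intro z hz
  have hne : ∀ l' : ℝ, l' < l → (lamSet n η l').Infinite := by
    intro l' hl'
    rcases le_or_gt l' 0 with h0 | h0
    · exact lamSet_nonpos_infinite n η h0
    · exact h l l' h0 hl' hl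
  have key : ∀ l' : ℝ, l' < l →
      (l' : EReal) ≤ sSup (Real.toEReal '' {l : ℝ | (lamSet n η l).Infinite}) := by
    intro l' hl'
    exact le_sSup ⟨l', hne l' hl', rfl⟩
  induction z with
  | bot =>
      calc (⊥ : EReal) < ((l - 1 : ℝ) : EReal) := EReal.bot_lt_coe _
        _ ≤ _ := key (l-1) (by linarith)
  | coe w =>
      have hw : w < l := by exact_mod_cast hz
      calc (w : EReal) < (((w + l)/2 : ℝ) : EReal) := by
            exact_mod_cast (by linarith : w < (w+l)/2)
        _ ≤ _ := key _ (by linarith)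
  | top => exact absurd hz (not_lt.2 le_top)

/-- `λ_n` is invariant under the fractional linear transformation
`ξ ↦ 1/(M(ξ − r))`. -/
theorem lambdaInvariant (n : ℕ) (hn : 1 ≤ n) (ξ : ℝ) (hξ : Irrational ξ)
    (r : ℤ) (hr : (r : ℝ) ≠ ξ) (M : ℤ) (hM : 1 ≤ M) :
    lambdaExp n (1 / (M * (ξ - r))) = lambdaExp n ξ := by
  have hMr : (M:ℝ) * (ξ - r) ≠ 0 := by
    have hM0 : (M:ℝ) ≠ 0 := by positivity
    have : ξ - r ≠ 0 := sub_ne_zero.2 (Ne.symm hr)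
    exact mul_ne_zero hM0 this
  set η : ℝ := 1 / ((M:ℝ) * (ξ - r)) with hη
  have hηne : η ≠ 0 := one_div_ne_zero hMr
  apply le_antisymm
  · -- lambdaExp η ≤ lambdaExp ξ, via ξ = (rM·η + 1)/(M·η + 0)
    apply lambdaExp_le_of_transfer
    intro l l' hl' hll' hinf
    have hcd : ((M:ℝ)) * η + (0:ℤ) ≠ 0 := by
      push_cast; simpa using mul_ne_zero (by positivity : (M:ℝ) ≠ 0) hηne
    have := transfer n η (r*M) 1 M 0 (by push_cast at hcd ⊢; exact hcd) hl' hll' hinf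
    have heq : (((r*M : ℤ):ℝ) * η + ((1:ℤ):ℝ)) / (((M:ℤ):ℝ) * η + ((0:ℤ):ℝ)) = ξ := by
      push_cast
      rw [hη]
      field_simp
      ring
    rwa [heq] at this
  · -- lambdaExp ξ ≤ lambdaExp η, via η = (0·ξ + 1)/(M·ξ - Mr)
    apply lambdaExp_le_of_transfer
    intro l l' hl' hll' hinf
    have hcd : ((M:ℤ):ℝ) * ξ + ((-(M*r) : ℤ):ℝ) ≠ 0 := by
      push_cast; rw [show (M:ℝ)*ξ + -((M:ℝ)*r) = (M:ℝ)*(ξ-r) by ring]; exact hMr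
    have := transfer n ξ 0 1 M (-(M*r)) hcd hl' hll' hinf
    have heq : (((0:ℤ):ℝ) * ξ + ((1:ℤ):ℝ)) / (((M:ℤ):ℝ) * ξ + ((-(M*r) : ℤ):ℝ)) = η := by
      push_cast
      rw [hη]
      rw [show (0:ℝ)*ξ + 1 = 1 by ring, show (M:ℝ)*ξ + -((M:ℝ)*r) = (M:ℝ)*(ξ-r) by ring]
    rwa [heq] at this
end
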